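/- arXiv:math/0503120 — 4 statements merged into one kernel-verified Lean document; each statement's English description precedes it below -/
import Mathlib

section
/- Let 0 < q < 1, let ν be a positive integer, let z > 0 be real and let s ∈ ℂ with Re(s) > ν + 1. Then both of the following series converge absolutely and Σ_{n=0}^∞ q^{(n+z)(s−ν)}·[n+z]_q^{−s} = (1−q)^s·Σ_{l=0}^∞ ((s)_l/l!)·q^{z(s−ν+l)}/(1 − q^{s−ν+l}), where (s)_l := s(s+1)⋯(s+l−1) is the Pochhammer symbol ((s)_0 := 1). -/
open Complex

/-- `q^w := exp(w · log q)` with the real logarithm of `q`. -/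
noncomputable def qpow (q : ℝ) (w : ℂ) : ℂ := Complex.exp (w * Real.log q)

namespace Stmt15Aux

noncomputable def pc (s : ℂ) (l : ℕ) : ℂ := (ascPochhammer ℂ l).eval s / (Nat.factorial l : ℂ)

lemma pc_zero (s : ℂ) : pc s 0 = 1 := by simp [pc]

lemma pc_succ (s : ℂ) (l : ℕ) : ((l : ℂ) + 1) * pc s (l + 1) = (s + l) * pc s l := by
  have h2 : (Nat.factorial l : ℂ) ≠ 0 := by exact_mod_cast Nat.factorial_ne_zero l
  have h3 : ((l:ℂ)+1) ≠ 0 := Nat.cast_add_one_ne_zero l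
  simp only [pc, ascPochhammer_succ_eval, Nat.factorial_succ]
  push_cast
  field_simp

lemma pc_succ' (s : ℂ) (l : ℕ) : pc s (l + 1) = (s + l) * pc s l / ((l : ℂ) + 1) := by
  have h3 : ((l:ℂ)+1) ≠ 0 := Nat.cast_add_one_ne_zero l
  field_simp [← pc_succ s l]
  linear_combination pc_succ s l

lemma pc_bound (s : ℂ) (l : ℕ) : ‖pc s l‖ ≤ ((l : ℝ) + 1) ^ (⌈‖s‖⌉₊) := by
  set m := ⌈‖s‖⌉₊ with hm
  induction l with
  | zero => simp [pc_zero]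
  | succ l ih =>
    have hl1 : (0:ℝ) < (l:ℝ) + 1 := by positivity
    have habs : ‖((l:ℂ)+1)‖ = (l:ℝ)+1 := by
      have : ((l:ℂ)+1) = (((l:ℝ)+1 : ℝ) : ℂ) := by push_cast; ring
      rw [this, Complex.norm_real, Real.norm_eq_abs, abs_of_pos hl1]
    have hkey : ‖pc s (l+1)‖ = ‖s + (l:ℂ)‖ * ‖pc s l‖ / ((l:ℝ)+1) := by
      rw [pc_succ', norm_div, norm_mul, habs]
    have hsl : ‖s + (l:ℂ)‖ ≤ (m : ℝ) + l := by
      calc ‖s + (l:ℂ)‖ ≤ ‖s‖ + ‖(l:ℂ)‖ := norm_add_le _ _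
        _ ≤ (m:ℝ) + l := by
            have h := Nat.le_ceil ‖s‖
            have : ‖(l:ℂ)‖ = (l:ℝ) := by
              rw [Complex.norm_natCast]
            rw [this]
            exact add_le_add (by exact_mod_cast h) le_rfl
    have hber : 1 + (m:ℝ) * (1/((l:ℝ)+1)) ≤ (1 + 1/((l:ℝ)+1)) ^ m := by
      apply one_add_mul_le_pow
      have : (0:ℝ) < 1/((l:ℝ)+1) := by positivity
      linarith
    have hp : (0:ℝ) < ((l:ℝ)+1)^m := by positivity
    have hpow : ((l:ℝ)+1+(m:ℝ)) * ((l:ℝ)+1)^m ≤ ((l:ℝ)+2)^m * ((l:ℝ)+1) := by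
      have h1 : (1 + 1/((l:ℝ)+1)) = ((l:ℝ)+2)/((l:ℝ)+1) := by field_simp; ring
      have h2 : (1 + 1/((l:ℝ)+1))^m = ((l:ℝ)+2)^m / (((l:ℝ)+1)^m) := by
        rw [h1, div_pow]
      rw [h2] at hber
      have h3 := mul_le_mul_of_nonneg_right hber (le_of_lt hp)
      rw [div_mul_cancel₀ _ (ne_of_gt hp)] at h3
      have h4 : (1 + (m:ℝ)*(1/((l:ℝ)+1))) * ((l:ℝ)+1)^m * ((l:ℝ)+1)
          = ((l:ℝ)+1+(m:ℝ)) * ((l:ℝ)+1)^m := by field_simp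
      nlinarith [h3, h4]
    have hpc : (0:ℝ) ≤ ‖pc s l‖ := norm_nonneg _
    have hstep : ‖s + (l:ℂ)‖ * ‖pc s l‖ ≤ ((m:ℝ)+l) * ((l:ℝ)+1)^m := by
      apply mul_le_mul hsl ih hpc
      positivity
    rw [hkey, div_le_iff₀ hl1]
    push_cast
    calc ‖s + (l:ℂ)‖ * ‖pc s l‖ ≤ ((m:ℝ)+l) * ((l:ℝ)+1)^m := hstep
      _ ≤ ((l:ℝ)+1+(m:ℝ)) * ((l:ℝ)+1)^m := by nlinarith [hp]
      _ ≤ ((l:ℝ)+2)^m * ((l:ℝ)+1) := hpow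
      _ = ((l:ℝ)+1+1)^m * ((l:ℝ)+1) := by ring_nf


lemma sum_aux (k : ℕ) {r : ℝ} (h0 : 0 < r) (h1 : r < 1) :
    Summable (fun l : ℕ => ((l : ℝ) + 1) ^ k * r ^ l) := by
  have h : Summable (fun n : ℕ => (n:ℝ) ^ k * r ^ n) :=
    summable_pow_mul_geometric_of_norm_lt_one k
      (by rw [Real.norm_eq_abs, abs_of_pos h0]; exact h1)
  have h2 := (summable_nat_add_iff 1).2 h
  have h3 := h2.mul_left r⁻¹
  refine h3.congr fun l => ?_
  have hr : r ≠ 0 := ne_of_gt h0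
  push_cast
  field_simp
  ring

lemma summable_pc_mul (s : ℂ) {r : ℝ} (h0 : 0 < r) (h1 : r < 1) :
    Summable (fun l : ℕ => ‖pc s l‖ * r ^ l) := by
  refine Summable.of_nonneg_of_le (fun l => by positivity) (fun l => ?_)
    (sum_aux ⌈‖s‖⌉₊ h0 h1)
  exact mul_le_mul_of_nonneg_right (pc_bound s l) (by positivity)

lemma binomial (s : ℂ) {x : ℝ} (hx0 : 0 < x) (hx1 : x < 1) :
    HasSum (fun l : ℕ => pc s l * (x:ℂ)^l) (Complex.exp (-s * Real.log (1 - x))) := by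
  set m := ⌈‖s‖⌉₊ with hm
  set r : ℝ := (x+1)/2 with hrdef
  have hr0 : 0 < r := by rw [hrdef]; linarith
  have hxr : x < r := by rw [hrdef]; linarith
  have hr1 : r < 1 := by rw [hrdef]; linarith
  set t : Set ℝ := Set.Ioo (-r) r with ht_def
  have ht : IsOpen t := isOpen_Ioo
  have h't : IsPreconnected t := isPreconnected_Ioo
  set g : ℕ → ℝ → ℂ := fun l y => pc s l * ((y:ℂ))^l with hg_def
  set g' : ℕ → ℝ → ℂ := fun l y => pc s l * ((l:ℂ) * ((y:ℂ))^(l-1)) with hg'_def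
  set u : ℕ → ℝ := fun l => ((l:ℝ)+1)^(m+1) * r^(l-1) with hu_def
  have hu : Summable u := by
    apply (summable_nat_add_iff 1).1
    refine Summable.of_nonneg_of_le (fun l => by positivity) (fun l => ?_)
      ((sum_aux (m+1) hr0 hr1).mul_left (2^(m+1)))
    simp only [hu_def, Nat.add_sub_cancel]
    push_cast
    have h1 : ((l:ℝ)+1+1)^(m+1) ≤ (2*((l:ℝ)+1))^(m+1) := by
      apply pow_le_pow_left₀ (by positivity)
      linarith
    have h2 : (2*((l:ℝ)+1))^(m+1) = 2^(m+1) * ((l:ℝ)+1)^(m+1) := by rw [mul_pow]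
    nlinarith [pow_nonneg (le_of_lt hr0) l, pow_nonneg (by positivity : (0:ℝ) ≤ (l:ℝ)+1) (m+1)]
  have hg : ∀ l y, HasDerivAt (g l) (g' l y) y := by
    intro l y
    exact ((hasDerivAt_pow l ((y:ℝ):ℂ)).comp_ofReal).const_mul (pc s l)
  have hg'bound : ∀ l y, y ∈ t → ‖g' l y‖ ≤ u l := by
    intro l y hy
    have hyr : |y| ≤ r := le_of_lt (abs_lt.2 ⟨hy.1, hy.2⟩)
    have h1 : ‖g' l y‖ = ‖pc s l‖ * ((l:ℝ) * |y|^(l-1)) := by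
      rw [hg'_def]
      simp only [norm_mul, Complex.norm_natCast]
      rw [← Complex.ofReal_pow]
      simp [abs_pow]
    rw [h1]
    have h2 : |y|^(l-1) ≤ r^(l-1) := pow_le_pow_left₀ (abs_nonneg y) hyr _
    have h3 : ‖pc s l‖ ≤ ((l:ℝ)+1)^m := pc_bound s l
    have h4 : (l:ℝ) ≤ (l:ℝ)+1 := by linarith
    calc ‖pc s l‖ * ((l:ℝ) * |y|^(l-1)) ≤ ((l:ℝ)+1)^m * (((l:ℝ)+1) * r^(l-1)) := by
          apply mul_le_mul h3 _ (by positivity) (by positivity)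
          apply mul_le_mul h4 h2 (by positivity) (by positivity)
      _ = u l := by simp only [hu_def, pow_succ]; ring
  have h0t : (0:ℝ) ∈ t := ⟨by linarith, hr0⟩
  have hg0 : Summable (fun l => g l 0) := by
    apply summable_of_ne_finset_zero (s := {0})
    intro l hl
    have : l ≠ 0 := by simpa using hl
    simp [hg_def, zero_pow this]
  have hF : ∀ y ∈ t, HasDerivAt (fun w => ∑' l, g l w) (∑' l, g' l y) y := by
    intro y hy
    exact hasDerivAt_tsum_of_isPreconnected hu ht h't (fun n y _ => hg n y)
      hg'bound h0t hg0 hy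
  have hgsum : ∀ y : ℝ, |y| ≤ r → Summable (fun l => g l y) := by
    intro y hy
    apply Summable.of_norm
    refine Summable.of_nonneg_of_le (fun l => norm_nonneg _) (fun l => ?_)
      (summable_pc_mul s hr0 hr1)
    have he : ‖g l y‖ = ‖pc s l‖ * |y|^l := by
      simp only [hg_def, norm_mul, ← Complex.ofReal_pow, Complex.norm_real,
        Real.norm_eq_abs, abs_pow]
    rw [he]
    exact mul_le_mul_of_nonneg_left (pow_le_pow_left₀ (abs_nonneg y) hy l) (norm_nonneg _)
  have hg'sum : ∀ y ∈ t, Summable (fun l => g' l y) := by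
    intro y hy
    apply Summable.of_norm
    exact Summable.of_nonneg_of_le (fun l => norm_nonneg _) (fun l => hg'bound l y hy) hu
  have hkey : ∀ y ∈ t, (1 - (y:ℂ)) * (∑' l, g' l y) = s * (∑' l, g l y) := by
    intro y hy
    set Y := (y:ℂ) with hY
    set d : ℕ → ℂ := fun l => (l:ℂ) * pc s l * Y^(l-1) with hd_def
    have hd : Summable d := by
      refine (hg'sum y hy).congr fun l => ?_
      simp only [hg'_def, hd_def]; ring
    have hd1 : Summable (fun l => d (l+1)) := (summable_nat_add_iff 1).2 hd
    have htele : HasSum (fun l => d l - d (l+1)) 0 := by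
      have hsum : Summable (fun l => d l - d (l+1)) := hd.sub hd1
      have h2 := hsum.hasSum.tendsto_sum_nat
      have hps : ∀ n, ∑ i ∈ Finset.range n, (d i - d (i+1)) = d 0 - d n :=
        fun n => Finset.sum_range_sub' d n
      have hd0 : d 0 = 0 := by simp [hd_def]
      have h3 : Filter.Tendsto (fun n => d 0 - d n) Filter.atTop (nhds 0) := by
        rw [hd0]
        simpa using (hd.tendsto_atTop_zero).neg
      have h2' := Filter.Tendsto.congr hps h2
      have h4 : (∑' l, (d l - d (l+1))) = 0 := tendsto_nhds_unique h2' h3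
      exact h4 ▸ hsum.hasSum
    have hterm : ∀ l, (1 - Y) * (g' l y) - s * (g l y) = d l - d (l+1) := by
      intro l
      cases l with
      | zero =>
        have h1 : pc s 1 = s := by
          have := pc_succ s 0
          simpa [pc_zero] using this
        simp [hg_def, hg'_def, hd_def, pc_zero, h1]
      | succ l =>
        have hrec2 := pc_succ s (l+1)
        push_cast at hrec2
        simp only [hg_def, hg'_def, hd_def, Nat.add_sub_cancel]
        push_cast
        linear_combination ((Y:ℂ)^(l+1)) * hrec2
    have hT : HasSum (fun l => (1-Y) * g' l y) ((1-Y) * ∑' l, g' l y) :=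
      ((hg'sum y hy).hasSum).mul_left _
    have hyabs : |y| ≤ r := le_of_lt (abs_lt.2 ⟨hy.1, hy.2⟩)
    have hS : HasSum (fun l => s * g l y) (s * ∑' l, g l y) :=
      ((hgsum y hyabs).hasSum).mul_left _
    have h5 := htele.add hS
    have h6 : (fun l => (d l - d (l+1)) + s * g l y) = (fun l => (1-Y) * g' l y) := by
      funext l
      rw [← hterm l]; ring
    rw [h6] at h5
    have h7 := h5.unique hT
    rw [← h7, zero_add]
  set F : ℝ → ℂ := fun y => ∑' l, g l y with hF_def
  have hG : ∀ y ∈ Set.Icc (0:ℝ) x,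
      HasDerivAt (fun w : ℝ => Complex.exp (s * (Real.log (1-w) : ℂ)) * F w) 0 y := by
    intro y hy
    have hyt : y ∈ t := ⟨by linarith [hy.1, hr0], lt_of_le_of_lt hy.2 hxr⟩
    have h1y : (0:ℝ) < 1 - y := by linarith [hy.2, hx1]
    have hlog : HasDerivAt (fun w : ℝ => Real.log (1 - w)) (-(1-y)⁻¹) y := by
      have hinner : HasDerivAt (fun w : ℝ => 1 - w) (-1 : ℝ) y := by
        exact (hasDerivAt_id' y).const_sub 1
      have h := (Real.hasDerivAt_log (ne_of_gt h1y)).comp y hinner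
      rw [show -(1-y)⁻¹ = (1-y)⁻¹ * (-1:ℝ) by ring]
      exact h
    have hexp : HasDerivAt (fun w : ℝ => Complex.exp (s * (Real.log (1-w) : ℂ)))
        (Complex.exp (s * (Real.log (1-y):ℂ)) * (s * ((-(1-y)⁻¹ : ℝ) : ℂ))) y :=
      HasDerivAt.cexp ((hlog.ofReal_comp).const_mul s)
    have hderivF := hF y hyt
    have hprod := hexp.mul hderivF
    have hne : (1 - (y:ℂ)) ≠ 0 := by
      have : ((1-y:ℝ) : ℂ) ≠ 0 := by
        exact_mod_cast ne_of_gt h1y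
      simpa [Complex.ofReal_sub] using this
    have hTval : (∑' l, g' l y) = s * F y / (1 - (y:ℂ)) := by
      rw [eq_div_iff hne]
      have := hkey y hyt
      rw [hF_def]
      linear_combination this
    refine hprod.congr_deriv ?_
    symm
    rw [hTval]
    have hco : ((1-y:ℝ)⁻¹ : ℝ) = ((1:ℝ)-y)⁻¹ := rfl
    have hcoe : (((1-y)⁻¹ : ℝ) : ℂ) = (1 - (y:ℂ))⁻¹ := by
      push_cast
      ring
    rw [show ((-(1-y)⁻¹ : ℝ) : ℂ) = -(((1-y)⁻¹ : ℝ) : ℂ) by push_cast; ring, hcoe]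
    field_simp
    ring
  have hconst := constant_of_has_deriv_right_zero
      (f := fun w : ℝ => Complex.exp (s * (Real.log (1-w) : ℂ)) * F w) (a := 0) (b := x)
      (fun y hy => ((hG y hy).continuousAt).continuousWithinAt)
      (fun y hy => (hG y (Set.mem_Icc_of_Ico hy)).hasDerivWithinAt)
  have hx' := hconst x (Set.right_mem_Icc.2 (le_of_lt hx0))
  have hF0 : F 0 = 1 := by
    show (∑' (l:ℕ), g l (0:ℝ)) = 1
    have h := tsum_eq_single (L := SummationFilter.unconditional ℕ) (f := fun l => g l (0:ℝ)) 0
      (fun l hl => by simp [hg_def, zero_pow hl])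
    rw [h]
    simp [hg_def, pc_zero]
  beta_reduce at hx'
  rw [hF0, sub_zero, Real.log_one] at hx'
  simp only [Complex.ofReal_zero, mul_zero, Complex.exp_zero, mul_one] at hx'
  have hsx : Summable (fun l => pc s l * (x:ℂ)^l) := by
    have := hgsum x (by rw [abs_of_pos hx0]; exact le_of_lt hxr)
    exact this
  rw [hsx.hasSum_iff]
  have hFx : (∑' l, pc s l * (x:ℂ)^l) = F x := rfl
  rw [hFx]
  have hfinal : F x = (Complex.exp (s * (Real.log (1-x) : ℂ)))⁻¹ :=
    eq_inv_of_mul_eq_one_right hx'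
  rw [hfinal, ← Complex.exp_neg]
  ring_nf



lemma qpow_add (q : ℝ) (a b : ℂ) : qpow q (a + b) = qpow q a * qpow q b := by
  rw [qpow, qpow, qpow, ← Complex.exp_add]
  ring_nf

lemma qpow_nat_mul (q : ℝ) (n : ℕ) (w : ℂ) : qpow q ((n:ℂ) * w) = (qpow q w) ^ n := by
  rw [qpow, qpow, ← Complex.exp_nat_mul]
  ring_nf

lemma norm_qpow {q : ℝ} (hq : 0 < q) (w : ℂ) : ‖qpow q w‖ = q ^ w.re := by
  rw [qpow, Complex.norm_exp, Real.rpow_def_of_pos hq]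
  congr 1
  simp [Complex.mul_re]
  ring

lemma qpow_ofReal {q : ℝ} (hq : 0 < q) (x : ℝ) : qpow q (x:ℂ) = ((q ^ x : ℝ) : ℂ) := by
  rw [qpow, Real.rpow_def_of_pos hq, Complex.ofReal_exp, ← Complex.ofReal_mul, mul_comm]

lemma qpow_geom {q : ℝ} (hq0 : 0 < q) (hq1 : q < 1) {w : ℂ} (hw : 0 < w.re) (z : ℝ) :
    HasSum (fun n : ℕ => qpow q (((n:ℂ) + z) * w))
      (qpow q ((z:ℂ) * w) / (1 - qpow q w)) := by
  have hnorm : ‖qpow q w‖ < 1 := by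
    rw [norm_qpow hq0]
    exact Real.rpow_lt_one (le_of_lt hq0) hq1 hw
  have h := (hasSum_geometric_of_norm_lt_one hnorm).mul_left (qpow q ((z:ℂ) * w))
  have he : (fun n : ℕ => qpow q ((z:ℂ) * w) * (qpow q w) ^ n)
      = (fun n : ℕ => qpow q (((n:ℂ) + z) * w)) := by
    funext n
    rw [← qpow_nat_mul, ← qpow_add]
    congr 1
    ring
  rw [he] at h
  rw [div_eq_mul_inv]
  exact h



end Stmt15Aux

open Stmt15Aux in
theorem stmt15 (q : ℝ) (hq0 : 0 < q) (hq1 : q < 1) (ν : ℕ) (hν : 0 < ν)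
    (z : ℝ) (hz : 0 < z) (s : ℂ) (hs : (ν : ℝ) + 1 < s.re) :
    Summable (fun n : ℕ => ‖qpow q (((n : ℂ) + z) * (s - (ν : ℂ))) *
      Complex.exp (-s * Real.log ((1 - q ^ ((n : ℝ) + z)) / (1 - q)))‖) ∧
    Summable (fun l : ℕ => ‖((ascPochhammer ℂ l).eval s / (Nat.factorial l : ℂ)) *
      qpow q ((z : ℂ) * (s - (ν : ℂ) + (l : ℂ))) / (1 - qpow q (s - (ν : ℂ) + (l : ℂ)))‖) ∧
    (∑' n : ℕ, qpow q (((n : ℂ) + z) * (s - (ν : ℂ))) *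
        Complex.exp (-s * Real.log ((1 - q ^ ((n : ℝ) + z)) / (1 - q)))) =
      Complex.exp (s * Real.log (1 - q)) *
        ∑' l : ℕ, ((ascPochhammer ℂ l).eval s / (Nat.factorial l : ℂ)) *
          qpow q ((z : ℂ) * (s - (ν : ℂ) + (l : ℂ))) /
            (1 - qpow q (s - (ν : ℂ) + (l : ℂ))) := by
  have hq0' : (0:ℝ) ≤ q := le_of_lt hq0
  set σ := s.re with hσ
  have hσν : 1 < σ - ν := by linarith
  have h1q : (0:ℝ) < 1 - q := by linarith
  -- basic positivity
  have hx : ∀ n : ℕ, 0 < q ^ ((n:ℝ) + z) := fun n => Real.rpow_pos_of_pos hq0 _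
  have hx1 : ∀ n : ℕ, q ^ ((n:ℝ) + z) < 1 := fun n =>
    Real.rpow_lt_one hq0' hq1 (by positivity)
  have h1x : ∀ n : ℕ, (0:ℝ) < 1 - q ^ ((n:ℝ) + z) := fun n => by linarith [hx1 n]
  have hxC : ∀ n : ℕ, ((q ^ ((n:ℝ)+z) : ℝ) : ℂ) = qpow q ((n:ℂ) + z) := by
    intro n
    rw [show ((n:ℂ) + (z:ℂ)) = ((((n:ℝ)+z) : ℝ) : ℂ) by push_cast; ring,
      qpow_ofReal hq0]
  set Fnl : ℕ → ℕ → ℂ :=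
    fun n l => pc s l * qpow q (((n:ℂ) + z) * (s - (ν:ℂ) + (l:ℂ))) with hF
  have hre : ∀ (n l : ℕ), ((((n:ℂ) + z)) * (s - (ν:ℂ) + (l:ℂ))).re
      = ((n:ℝ)+z) * (σ - ν + l) := by
    intro n l
    rw [show ((n:ℂ) + (z:ℂ)) = ((((n:ℝ)+z) : ℝ) : ℂ) by push_cast; ring]
    simp [Complex.mul_re, Complex.sub_re, Complex.add_re, Complex.natCast_re,
      Complex.ofReal_re, Complex.ofReal_im, Complex.natCast_im, hσ]
  have hre2 : ∀ l : ℕ, (s - (ν:ℂ) + (l:ℂ)).re = σ - ν + l := by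
    intro l
    simp [Complex.sub_re, Complex.add_re, Complex.natCast_re, hσ]
  have hre2pos : ∀ l : ℕ, 0 < (s - (ν:ℂ) + (l:ℂ)).re := by
    intro l
    rw [hre2]
    have : (0:ℝ) ≤ l := Nat.cast_nonneg l
    linarith
  -- binomial expansion per n
  have hbin : ∀ n : ℕ, HasSum (fun l => Fnl n l)
      (qpow q (((n:ℂ) + z) * (s - (ν:ℂ))) *
        Complex.exp (-s * Real.log (1 - q ^ ((n:ℝ)+z)))) := by
    intro n
    have h := (binomial s (hx n) (hx1 n)).mul_left (qpow q (((n:ℂ) + z) * (s - (ν:ℂ))))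
    have he : (fun l => qpow q (((n:ℂ) + z) * (s - (ν:ℂ))) *
        (pc s l * ((q ^ ((n:ℝ)+z) : ℝ) : ℂ) ^ l)) = fun l => Fnl n l := by
      funext l
      rw [hxC n, ← qpow_nat_mul q l ((n:ℂ) + z)]
      simp only [hF]
      rw [show ((n:ℂ) + z) * (s - (ν:ℂ) + (l:ℂ))
        = ((n:ℂ) + z) * (s - (ν:ℂ)) + (l:ℂ) * ((n:ℂ) + z) by ring, qpow_add]
      ring
    rw [he] at h
    exact h
  -- norms
  have hnorm : ∀ n l : ℕ, ‖Fnl n l‖ = ‖pc s l‖ * q ^ (((n:ℝ)+z) * (σ - ν + l)) := by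
    intro n l
    rw [hF]
    rw [norm_mul, norm_qpow hq0, hre]
  have hsplitpow : ∀ n l : ℕ, q ^ (((n:ℝ)+z) * (σ - ν + (l:ℝ)))
      = q ^ (((n:ℝ)+z) * (σ - ν)) * (q ^ ((n:ℝ)+z)) ^ l := by
    intro n l
    rw [show ((n:ℝ)+z) * (σ - ν + (l:ℝ)) = ((n:ℝ)+z)*(σ-ν) + ((n:ℝ)+z)*(l:ℝ) by ring,
      Real.rpow_add (hq0), Real.rpow_mul hq0' ((n:ℝ)+z) (l:ℝ), Real.rpow_natCast (q ^ ((n:ℝ)+z)) l]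
  have hsum_l : ∀ n, Summable (fun l => ‖Fnl n l‖) := by
    intro n
    have h := (summable_pc_mul s (hx n) (hx1 n)).mul_left (q ^ (((n:ℝ)+z) * (σ - ν)))
    refine h.congr fun l => ?_
    rw [hnorm, hsplitpow]
    ring
  -- uniform bound over n
  have hqz0 : 0 < q ^ z := Real.rpow_pos_of_pos hq0 z
  have hqz1 : q ^ z < 1 := Real.rpow_lt_one hq0' hq1 hz
  have hsumM : Summable (fun l => ‖pc s l‖ * (q ^ z) ^ l) := summable_pc_mul s hqz0 hqz1
  set M : ℝ := ∑' l : ℕ, ‖pc s l‖ * (q ^ z) ^ l with hM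
  have htsum_le : ∀ n, ∑' l, ‖Fnl n l‖ ≤ q ^ (((n:ℝ)+z) * (σ - ν)) * M := by
    intro n
    have h1 : ∑' l, ‖Fnl n l‖
        = q ^ (((n:ℝ)+z) * (σ - ν)) * ∑' l, ‖pc s l‖ * (q ^ ((n:ℝ)+z)) ^ l := by
      rw [← tsum_mul_left]
      exact tsum_congr fun l => by rw [hnorm, hsplitpow]; ring
    rw [h1, hM]
    apply mul_le_mul_of_nonneg_left _ (Real.rpow_nonneg hq0' _)
    apply Summable.tsum_le_tsum _ (summable_pc_mul s (hx n) (hx1 n)) hsumM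
    intro l
    apply mul_le_mul_of_nonneg_left _ (norm_nonneg _)
    apply pow_le_pow_left₀ (le_of_lt (hx n))
    apply Real.rpow_le_rpow_of_exponent_ge hq0 (le_of_lt hq1)
    have : (0:ℝ) ≤ (n:ℝ) := Nat.cast_nonneg n
    linarith
  have hCn_sum : Summable (fun n : ℕ => q ^ (((n:ℝ)+z) * (σ - ν)) * M) := by
    have hρ0 : (0:ℝ) ≤ q ^ (σ - ν) := Real.rpow_nonneg hq0' _
    have hρ1 : q ^ (σ - ν) < 1 := Real.rpow_lt_one hq0' hq1 (by linarith)
    have h := (summable_geometric_of_lt_one hρ0 hρ1).mul_left (q ^ (z * (σ - ν)) * M)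
    refine h.congr fun n => ?_
    have h2 : (q ^ (σ - ν)) ^ n = q ^ ((n:ℝ) * (σ - ν)) := by
      rw [← Real.rpow_natCast (q ^ (σ - ν)) n, ← Real.rpow_mul hq0']
      ring_nf
    have h3 : q ^ (((n:ℝ)+z) * (σ - ν)) = q ^ ((n:ℝ) * (σ - ν)) * q ^ (z * (σ - ν)) := by
      rw [← Real.rpow_add hq0]
      ring_nf
    rw [h2, h3]
    ring
  have houter : Summable (fun n => ∑' l, ‖Fnl n l‖) :=
    Summable.of_nonneg_of_le (fun n => tsum_nonneg fun l => norm_nonneg _) htsum_le hCn_sum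
  have hprod : Summable (fun p : ℕ × ℕ => ‖Fnl p.1 p.2‖) :=
    (summable_prod_of_nonneg (fun p => norm_nonneg _)).2 ⟨fun n => hsum_l n, houter⟩
  -- split of the summand
  have hsplit : ∀ n : ℕ, qpow q (((n : ℂ) + z) * (s - (ν : ℂ))) *
      Complex.exp (-s * Real.log ((1 - q ^ ((n : ℝ) + z)) / (1 - q)))
      = Complex.exp (s * (Real.log (1 - q) : ℂ)) * ∑' l, Fnl n l := by
    intro n
    rw [(hbin n).tsum_eq]
    rw [Real.log_div (ne_of_gt (h1x n)) (ne_of_gt h1q)]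
    push_cast
    rw [show -s * ((Real.log (1 - q ^ ((n:ℝ)+z)) : ℂ) - (Real.log (1 - q) : ℂ))
      = (-s * (Real.log (1 - q ^ ((n:ℝ)+z)) : ℂ)) + s * (Real.log (1 - q) : ℂ) by ring]
    rw [Complex.exp_add]
    ring
  -- geometric sum per l
  have hgeo : ∀ l : ℕ, HasSum (fun n : ℕ => Fnl n l)
      (pc s l * (qpow q ((z:ℂ) * (s - (ν:ℂ) + (l:ℂ))) /
        (1 - qpow q (s - (ν:ℂ) + (l:ℂ))))) := by
    intro l
    have h := (qpow_geom hq0 hq1 (hre2pos l) z).mul_left (pc s l)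
    refine h.congr fun n => ?_
    rw [hF]
  have hterm2 : ∀ l : ℕ, ((ascPochhammer ℂ l).eval s / (Nat.factorial l : ℂ)) *
      qpow q ((z : ℂ) * (s - (ν : ℂ) + (l : ℂ))) / (1 - qpow q (s - (ν : ℂ) + (l : ℂ)))
      = pc s l * (qpow q ((z:ℂ) * (s - (ν:ℂ) + (l:ℂ))) /
        (1 - qpow q (s - (ν:ℂ) + (l:ℂ)))) := fun l => mul_div_assoc _ _ _
  have hswap : Summable (fun p : ℕ × ℕ => ‖Fnl p.2 p.1‖) := hprod.prod_symm
  have houter2 : Summable (fun l => ∑' n, ‖Fnl n l‖) :=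
    ((summable_prod_of_nonneg (fun p => norm_nonneg _)).1 hswap).2
  refine ⟨?_, ?_, ?_⟩
  · -- first summability
    have h1 : Summable (fun n => ‖Complex.exp (s * (Real.log (1 - q) : ℂ))‖ *
        ∑' l, ‖Fnl n l‖) := houter.mul_left _
    refine Summable.of_nonneg_of_le (fun n => norm_nonneg _) (fun n => ?_) h1
    rw [hsplit n, norm_mul]
    exact mul_le_mul_of_nonneg_left (norm_tsum_le_tsum_norm (hsum_l n)) (norm_nonneg _)
  · -- second summability
    refine Summable.of_nonneg_of_le (fun l => norm_nonneg _) (fun l => ?_) houter2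
    rw [hterm2 l, ← (hgeo l).tsum_eq]
    exact norm_tsum_le_tsum_norm (hswap.prod_factor l)
  · -- the identity
    have hFsummable : Summable (Function.uncurry (fun n l => Fnl n l)) :=
      Summable.of_norm hprod
    calc (∑' n : ℕ, qpow q (((n : ℂ) + z) * (s - (ν : ℂ))) *
        Complex.exp (-s * Real.log ((1 - q ^ ((n : ℝ) + z)) / (1 - q))))
        = ∑' n : ℕ, Complex.exp (s * (Real.log (1 - q) : ℂ)) * ∑' l, Fnl n l :=
          tsum_congr hsplit
      _ = Complex.exp (s * (Real.log (1 - q) : ℂ)) * ∑' n : ℕ, ∑' l : ℕ, Fnl n l :=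
          tsum_mul_left
      _ = Complex.exp (s * (Real.log (1 - q) : ℂ)) * ∑' l : ℕ, ∑' n : ℕ, Fnl n l := by
          rw [Summable.tsum_comm' hFsummable (fun n => (hbin n).summable)
            (fun l => (hgeo l).summable)]
      _ = Complex.exp (s * Real.log (1 - q)) *
          ∑' l : ℕ, ((ascPochhammer ℂ l).eval s / (Nat.factorial l : ℂ)) *
            qpow q ((z : ℂ) * (s - (ν : ℂ) + (l : ℂ))) /
              (1 - qpow q (s - (ν : ℂ) + (l : ℂ))) := by
          congr 1
          exact tsum_congr fun l => by rw [(hgeo l).tsum_eq, ← hterm2 l]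
end

section
/- Let 0 < q < 1, let ν be a positive integer, let z > 0 be real and let m ≥ 1 be an integer. Then, as the real non-integer variable s tends to 1 − m, the quantity (1−q)^s·Σ_{l=0}^∞ ((s)_l/l!)·q^{z(s−ν+l)}/(1 − q^{s−ν+l}) converges to −B_m^{(ν)}(z;q)/m. (For real non-integer s the denominators 1 − q^{s−ν+l} are nonzero and the series converges absolutely, so the expression is well defined; this expresses the special value ζ_q^{(ν)}(1−m,z) = −B_m^{(ν)}(z;q)/m of the meromorphic continuation of ζ_q^{(ν)}(s,z).) -/
open Complex Filter

/-- the `q`-Bernoulli polynomial `B_m^{(ν)}(z;q)` (closed form). -/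
noncomputable def Bq (q : ℝ) (ν : ℕ) (z : ℂ) (m : ℕ) : ℂ :=
  ((q : ℂ) - 1) ^ ((1 : ℤ) - m) *
    ((∑ l ∈ Finset.Icc 1 m, (-1) ^ l * (Nat.choose m l : ℂ) * (l : ℂ) *
        qpow q (z * (1 - (l : ℂ) - (ν : ℂ))) / (1 - qpow q (1 - (l : ℂ) - (ν : ℂ)))) +
      (1 / (Nat.choose (m + ν - 1) (ν - 1) : ℂ)) * (1 / (Real.log q : ℂ)))


lemma qpow_ofReal (q : ℝ) (hq : 0 < q) (x : ℝ) : qpow q (x : ℂ) = ((q ^ x : ℝ) : ℂ) := by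
  rw [qpow, Real.rpow_def_of_pos hq, Complex.ofReal_exp]
  push_cast
  ring_nf

lemma one_sub_qpow_ne (q : ℝ) (hq0 : 0 < q) (hq1 : q < 1) {x : ℝ} (hx : x ≠ 0) :
    (1 : ℂ) - qpow q (x : ℂ) ≠ 0 := by
  rw [qpow_ofReal q hq0, sub_ne_zero]
  intro h
  have h2 : (q : ℝ) ^ x = 1 := by exact_mod_cast h.symm
  rw [Real.rpow_def_of_pos hq0, Real.exp_eq_one_iff] at h2
  rcases mul_eq_zero.1 h2 with h3 | h3
  · exact (Real.log_ne_zero_of_pos_of_ne_one hq0 hq1.ne) h3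
  · exact hx h3

lemma aP_prod (n : ℕ) (x : ℂ) :
    (ascPochhammer ℂ n).eval x = ∏ j ∈ Finset.range n, (x + j) := by
  induction n with
  | zero => simp
  | succ n ih =>
    rw [ascPochhammer_succ_right, Finset.prod_range_succ, ← ih]
    simp [Polynomial.eval_mul]

lemma lim0 (q : ℝ) (hq0 : 0 < q) (hq1 : q < 1) :
    Tendsto (fun t : ℝ => (t : ℂ) / (1 - qpow q (t : ℂ)))
      (nhdsWithin 0 {t : ℝ | t ≠ 0}) (nhds (-1 / (Real.log q : ℂ))) := by
  have hlog : (Real.log q : ℂ) ≠ 0 := by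
    exact_mod_cast Complex.ofReal_ne_zero.2 (Real.log_ne_zero_of_pos_of_ne_one hq0 hq1.ne)
  have hderiv : HasDerivAt (fun w : ℂ => Complex.exp (w * (Real.log q : ℂ)))
      ((Real.log q : ℂ)) 0 := by
    have h1 : HasDerivAt (fun w : ℂ => w * (Real.log q : ℂ)) ((Real.log q : ℂ)) 0 :=
      hasDerivAt_mul_const _
    simpa using h1.cexp
  have hslope : Tendsto (fun w : ℂ => (Complex.exp (w * (Real.log q : ℂ)) - 1) / w)
      (nhdsWithin 0 {w : ℂ | w ≠ 0}) (nhds ((Real.log q : ℂ))) := by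
    have := hasDerivAt_iff_tendsto_slope.1 hderiv
    refine this.congr' ?_
    filter_upwards [self_mem_nhdsWithin] with w hw
    simp only [slope_def_field, sub_zero]
    congr 1
    simp
  have hemb : Tendsto (fun t : ℝ => (t : ℂ)) (nhdsWithin 0 {t : ℝ | t ≠ 0})
      (nhdsWithin 0 {w : ℂ | w ≠ 0}) := by
    rw [tendsto_nhdsWithin_iff]
    constructor
    · exact (Complex.continuous_ofReal.tendsto 0).mono_left nhdsWithin_le_nhds |>.congr (by simp)
    · filter_upwards [self_mem_nhdsWithin] with t ht
      simpa using ht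
  have hcomp : Tendsto (fun t : ℝ => (Complex.exp ((t : ℂ) * (Real.log q : ℂ)) - 1) / (t : ℂ))
      (nhdsWithin 0 {t : ℝ | t ≠ 0}) (nhds ((Real.log q : ℂ))) := hslope.comp hemb
  have hinv : Tendsto (fun t : ℝ =>
      -((Complex.exp ((t : ℂ) * (Real.log q : ℂ)) - 1) / (t : ℂ))⁻¹)
      (nhdsWithin 0 {t : ℝ | t ≠ 0}) (nhds (-((Real.log q : ℂ))⁻¹)) :=
    (hcomp.inv₀ hlog).neg
  have : (-((Real.log q : ℂ))⁻¹) = -1 / (Real.log q : ℂ) := by ring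
  rw [← this]
  refine hinv.congr fun t => ?_
  rw [qpow]
  rw [inv_div, ← neg_div]
  rw [show (1 : ℂ) - Complex.exp ((t : ℂ) * (Real.log q : ℂ)) =
    -(Complex.exp ((t : ℂ) * (Real.log q : ℂ)) - 1) from by ring, div_neg, ← neg_div]

noncomputable def Fq (q z : ℝ) (ν : ℕ) (s : ℝ) (l : ℕ) : ℂ :=
  (ascPochhammer ℂ l).eval (s : ℂ) / (Nat.factorial l : ℂ) *
    qpow q ((z : ℂ) * ((s : ℂ) - (ν : ℂ) + (l : ℂ))) /
      (1 - qpow q ((s : ℂ) - (ν : ℂ) + (l : ℂ)))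

noncomputable def Gq (q z : ℝ) (ν m : ℕ) (l : ℕ) : ℂ :=
  if l = m + ν - 1 then
    (∏ j ∈ (Finset.range (m + ν - 1)).erase (m - 1), ((1 : ℂ) - (m : ℂ) + (j : ℂ))) /
      (Nat.factorial (m + ν - 1) : ℂ) * (-1 / (Real.log q : ℂ))
  else
    (ascPochhammer ℂ l).eval (1 - (m : ℂ)) / (Nat.factorial l : ℂ) *
      qpow q ((z : ℂ) * (1 - (m : ℂ) - (ν : ℂ) + (l : ℂ))) /
        (1 - qpow q (1 - (m : ℂ) - (ν : ℂ) + (l : ℂ)))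

lemma tends_ns (q z : ℝ) (hq0 : 0 < q) (hq1 : q < 1) (ν m l : ℕ) (hν : 0 < ν) (hm : 1 ≤ m)
    (hl : l ≠ m + ν - 1) :
    Tendsto (fun s : ℝ => Fq q z ν s l)
      (nhdsWithin ((1 : ℝ) - m) {s : ℝ | ∀ k : ℤ, s ≠ (k : ℝ)}) (nhds (Gq q z ν m l)) := by
  have hx : ((1 : ℝ) - m) - ν + l ≠ 0 := by
    intro h
    have : (l : ℝ) + 1 = m + ν := by linarith
    have : l + 1 = m + ν := by exact_mod_cast this
    omega
  have hxC : (1 : ℂ) - (m : ℂ) - (ν : ℂ) + (l : ℂ) = ((((1 : ℝ) - m) - ν + l : ℝ) : ℂ) := by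
    push_cast; ring
  have hne : (1 : ℂ) - qpow q ((1 : ℂ) - (m : ℂ) - (ν : ℂ) + (l : ℂ)) ≠ 0 := by
    rw [hxC]; exact one_sub_qpow_ne q hq0 hq1 hx
  have hA : Continuous fun s : ℝ => (ascPochhammer ℂ l).eval (s : ℂ) :=
    (ascPochhammer ℂ l).continuous.comp Complex.continuous_ofReal
  have harg : Continuous fun s : ℝ => (s : ℂ) - (ν : ℂ) + (l : ℂ) :=
    (Complex.continuous_ofReal.sub continuous_const).add continuous_const
  have hB : Continuous fun s : ℝ => qpow q ((z : ℂ) * ((s : ℂ) - (ν : ℂ) + (l : ℂ))) :=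
    Complex.continuous_exp.comp ((continuous_const.mul harg).mul continuous_const)
  have hD : Continuous fun s : ℝ => (1 : ℂ) - qpow q ((s : ℂ) - (ν : ℂ) + (l : ℂ)) :=
    continuous_const.sub (Complex.continuous_exp.comp (harg.mul continuous_const))
  have hc : ContinuousAt (fun s : ℝ => Fq q z ν s l) ((1 : ℝ) - m) := by
    apply ContinuousAt.div
    · exact ((hA.continuousAt.div_const _).mul hB.continuousAt)
    · exact hD.continuousAt
    · convert hne using 2
      push_cast; ring
  have hval : Fq q z ν ((1 : ℝ) - m) l = Gq q z ν m l := by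
    rw [Fq, Gq, if_neg hl]
    push_cast
    norm_num
  rw [← hval]
  exact hc.tendsto.mono_left nhdsWithin_le_nhds

lemma tends_sp (q z : ℝ) (hq0 : 0 < q) (hq1 : q < 1) (ν m : ℕ) (hν : 0 < ν) (hm : 1 ≤ m) :
    Tendsto (fun s : ℝ => Fq q z ν s (m + ν - 1))
      (nhdsWithin ((1 : ℝ) - m) {s : ℝ | ∀ k : ℤ, s ≠ (k : ℝ)})
      (nhds (Gq q z ν m (m + ν - 1))) := by
  set l := m + ν - 1 with hl
  have hlC : (l : ℂ) = (m : ℂ) + (ν : ℂ) - 1 := by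
    rw [hl]; push_cast [Nat.cast_sub (by omega : 1 ≤ m + ν)]; ring
  have hmem : m - 1 ∈ Finset.range l := by
    rw [Finset.mem_range]; omega
  have hm1C : (((m - 1 : ℕ) : ℂ)) = (m : ℂ) - 1 := by
    push_cast [Nat.cast_sub hm]; ring
  have ha1 : ∀ s : ℝ, (s : ℂ) - (ν : ℂ) + (l : ℂ) = (((s + ((m : ℝ) - 1)) : ℝ) : ℂ) := by
    intro s; rw [hlC]; push_cast; ring
  have hsplit : ∀ s : ℝ, Fq q z ν s l =
      ((((s + ((m : ℝ) - 1)) : ℝ)) : ℂ) / (1 - qpow q ((((s + ((m : ℝ) - 1)) : ℝ)) : ℂ)) *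
      ((∏ j ∈ (Finset.range l).erase (m - 1), ((s : ℂ) + (j : ℂ))) / (Nat.factorial l : ℂ) *
        qpow q ((z : ℂ) * ((((s + ((m : ℝ) - 1)) : ℝ)) : ℂ))) := by
    intro s
    rw [Fq, aP_prod, ← Finset.mul_prod_erase _ _ hmem, ha1, hm1C]
    have : (s : ℂ) + ((m : ℂ) - 1) = (((s + ((m : ℝ) - 1)) : ℝ) : ℂ) := by push_cast; ring
    rw [this]
    ring
  have T1 : Tendsto (fun s : ℝ => s + ((m : ℝ) - 1))
      (nhdsWithin ((1 : ℝ) - m) {s : ℝ | ∀ k : ℤ, s ≠ (k : ℝ)})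
      (nhdsWithin 0 {t : ℝ | t ≠ 0}) := by
    rw [tendsto_nhdsWithin_iff]
    constructor
    · have := (continuous_id.add (continuous_const (y := (m : ℝ) - 1))).tendsto ((1 : ℝ) - m)
      simpa [Pi.add_def] using this.mono_left nhdsWithin_le_nhds
    · filter_upwards [self_mem_nhdsWithin] with s hs
      intro h0
      have : s = ((1 - (m : ℤ) : ℤ) : ℝ) := by push_cast; linarith
      exact hs (1 - (m : ℤ)) this
  have T2 := (lim0 q hq0 hq1).comp T1
  have hprodcont : Continuous fun s : ℝ =>
      (∏ j ∈ (Finset.range l).erase (m - 1), ((s : ℂ) + (j : ℂ))) / (Nat.factorial l : ℂ) *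
        qpow q ((z : ℂ) * ((((s + ((m : ℝ) - 1)) : ℝ)) : ℂ)) := by
    apply Continuous.mul
    · exact (continuous_finset_prod _ fun j _ =>
        Complex.continuous_ofReal.add continuous_const).div_const _
    · exact Complex.continuous_exp.comp
        ((continuous_const.mul (Complex.continuous_ofReal.comp
          (continuous_id.add continuous_const))).mul continuous_const)
  have T3 := (hprodcont.tendsto ((1 : ℝ) - m)).mono_left
    (nhdsWithin_le_nhds (s := {s : ℝ | ∀ k : ℤ, s ≠ (k : ℝ)}))
  have Tmul := T2.mul T3
  have hGq : Gq q z ν m l =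
      -1 / (Real.log q : ℂ) *
        ((∏ j ∈ (Finset.range l).erase (m - 1), (((((1 : ℝ) - m) : ℝ) : ℂ) + (j : ℂ))) /
          (Nat.factorial l : ℂ) *
          qpow q ((z : ℂ) * (((((1 : ℝ) - m) + ((m : ℝ) - 1)) : ℝ) : ℂ))) := by
    rw [Gq, if_pos rfl]
    have h0 : (((1 : ℝ) - m + ((m : ℝ) - 1) : ℝ) : ℂ) = 0 := by push_cast; ring
    rw [h0, show qpow q ((z : ℂ) * 0) = 1 from by rw [qpow]; simp, mul_one]
    have hpe : ∀ j : ℕ, ((((1 : ℝ) - m : ℝ)) : ℂ) + (j : ℂ) = (1 : ℂ) - (m : ℂ) + (j : ℂ) := by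
      intro j; push_cast; ring
    rw [Finset.prod_congr rfl (fun j _ => hpe j)]
    ring
  rw [hGq]
  exact Tmul.congr fun s => (hsplit s).symm

lemma Gq_zero (q z : ℝ) (ν m l : ℕ) (hm : 1 ≤ m) (hml : m ≤ l) (hl : l ≠ m + ν - 1) :
    Gq q z ν m l = 0 := by
  rw [Gq, if_neg hl]
  have h1 : (1 : ℂ) - (m : ℂ) = -(((m - 1 : ℕ) : ℂ)) := by
    push_cast [Nat.cast_sub hm]; ring
  rw [h1, ascPochhammer_eval_neg_coe_nat_of_lt (by omega)]
  simp

lemma fact_prod_eq (m : ℕ) : ∀ l : ℕ,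
    (Nat.factorial m) * (∏ j ∈ Finset.range l, (m + 1 + j)) = Nat.factorial (m + l)
  | 0 => by simp
  | l + 1 => by
    rw [Finset.prod_range_succ, ← mul_assoc, fact_prod_eq m l]
    rw [show m + (l + 1) = (m + l) + 1 by ring, Nat.factorial_succ]
    ring

lemma norm_Fq_le (q z : ℝ) (hq0 : 0 < q) (hq1 : q < 1) (hz : 0 < z) (ν m : ℕ) (hm : 1 ≤ m)
    (s : ℝ) (hs : |s - ((1 : ℝ) - m)| ≤ 1) (l : ℕ) (hl : m + ν + 2 ≤ l) :
    ‖Fq q z ν s l‖ ≤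
      ((m : ℝ) + l) ^ m * (q ^ z) ^ l * (((1 - q) * (q ^ z) ^ (m + ν))⁻¹) := by
  set r : ℝ := q ^ z with hr
  have hr0 : 0 < r := Real.rpow_pos_of_pos hq0 z
  have hq' : (0 : ℝ) < 1 - q := by linarith
  have hsl : -(m : ℝ) ≤ s := by
    have := abs_le.1 hs; linarith [this.1]
  have hsu : s ≤ 2 - m := by
    have := abs_le.1 hs; linarith [this.2]
  set x : ℝ := s - ν + l with hx
  have hx2 : (2 : ℝ) ≤ x := by
    rw [hx]
    have : (m : ℝ) + ν + 2 ≤ l := by exact_mod_cast hl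
    linarith
  have hxC : (s : ℂ) - (ν : ℂ) + (l : ℂ) = ((x : ℝ) : ℂ) := by push_cast [hx]; ring
  have hzxC : (z : ℂ) * ((s : ℂ) - (ν : ℂ) + (l : ℂ)) = (((z * x) : ℝ) : ℂ) := by
    rw [hxC]; push_cast; ring
  rw [Fq, hzxC, hxC, qpow_ofReal q hq0, qpow_ofReal q hq0]
  -- norm of numerator polynomial part
  have hA : ‖(ascPochhammer ℂ l).eval (s : ℂ)‖ ≤ ∏ j ∈ Finset.range l, ((m : ℝ) + 1 + j) := by
    rw [aP_prod]
    refine (Finset.norm_prod_le _ _).trans ?_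
    apply Finset.prod_le_prod (fun j _ => norm_nonneg _)
    intro j _
    refine (norm_add_le _ _).trans ?_
    rw [Complex.norm_real, Complex.norm_natCast]
    have hm1 : (1 : ℝ) ≤ (m : ℝ) := by exact_mod_cast hm
    have : |s| ≤ (m : ℝ) + 1 := by
      rw [abs_le]
      exact ⟨by linarith, by linarith⟩
    simpa [Real.norm_eq_abs] using add_le_add_right this (j : ℝ)
  have hfact : (0 : ℝ) < (Nat.factorial l : ℝ) := by exact_mod_cast Nat.factorial_pos l
  have hAd : ‖(ascPochhammer ℂ l).eval (s : ℂ)‖ / (Nat.factorial l : ℝ) ≤ ((m : ℝ) + l) ^ m := by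
    have h1 : (∏ j ∈ Finset.range l, ((m : ℝ) + 1 + j)) / (Nat.factorial l : ℝ) =
        ((m + l).choose m : ℝ) := by
      have h2 : ((Nat.factorial m : ℝ)) * (∏ j ∈ Finset.range l, ((m : ℝ) + 1 + j)) =
          (Nat.factorial (m + l) : ℝ) := by
        rw [← fact_prod_eq m l]; push_cast; ring
      have h3 : ((m + l).choose m) * (Nat.factorial m) * (Nat.factorial l) =
          Nat.factorial (m + l) := by
        have := Nat.choose_mul_factorial_mul_factorial (Nat.le_add_right m l)
        simpa [Nat.add_sub_cancel_left] using this
      have hmf : (Nat.factorial m : ℝ) ≠ 0 := by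
        exact_mod_cast Nat.factorial_ne_zero m
      have h3' : ((Nat.factorial (m + l) : ℕ) : ℝ) =
          ((m + l).choose m : ℝ) * (Nat.factorial m : ℝ) * (Nat.factorial l : ℝ) := by
        exact_mod_cast h3.symm
      rw [div_eq_iff hfact.ne']
      apply mul_left_cancel₀ hmf
      rw [h2, h3']
      ring
    calc ‖(ascPochhammer ℂ l).eval (s : ℂ)‖ / (Nat.factorial l : ℝ) ≤
        (∏ j ∈ Finset.range l, ((m : ℝ) + 1 + j)) / (Nat.factorial l : ℝ) := by
          gcongr
      _ = ((m + l).choose m : ℝ) := h1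
      _ ≤ ((m : ℝ) + l) ^ m / (Nat.factorial m : ℝ) := by
          have := Nat.choose_le_pow_div m (m + l) (α := ℝ)
          push_cast at this ⊢
          convert this using 2
      _ ≤ ((m : ℝ) + l) ^ m := by
          apply div_le_self (by positivity)
          exact_mod_cast Nat.one_le_iff_ne_zero.2 (Nat.factorial_ne_zero m)
  set k : ℕ := l - (m + ν) with hk
  have hkC : (k : ℝ) = (l : ℝ) - m - ν := by
    rw [hk]; push_cast [Nat.cast_sub (by omega : m + ν ≤ l)]; ring
  have hBx : q ^ (z * x) ≤ r ^ k := by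
    have hkx : (k : ℝ) ≤ x := by rw [hkC, hx]; linarith
    have h1 : q ^ (z * x) ≤ q ^ (z * (k : ℝ)) :=
      Real.rpow_le_rpow_of_exponent_ge hq0 hq1.le
        (mul_le_mul_of_nonneg_left hkx hz.le)
    have h2 : q ^ (z * (k : ℝ)) = r ^ k := by
      rw [Real.rpow_mul hq0.le, hr, Real.rpow_natCast]
    linarith [h1, h2.le, h2.ge]
  have hqx1 : q ^ x ≤ q := by
    have := Real.rpow_le_rpow_of_exponent_ge hq0 hq1.le (by linarith : (1 : ℝ) ≤ x)
    rwa [Real.rpow_one] at this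
  have hDx : 1 - q ≤ ‖(1 : ℂ) - ((q ^ x : ℝ) : ℂ)‖ := by
    rw [show (1 : ℂ) - ((q ^ x : ℝ) : ℂ) = (((1 - q ^ x : ℝ)) : ℂ) by push_cast; ring,
      Complex.norm_real, Real.norm_eq_abs, _root_.abs_of_nonneg (by linarith)]
    linarith
  have hBnorm : ‖(((q ^ (z * x) : ℝ)) : ℂ)‖ = q ^ (z * x) := by
    rw [Complex.norm_real, Real.norm_eq_abs, _root_.abs_of_nonneg (Real.rpow_nonneg hq0.le _)]
  rw [norm_div, norm_mul, norm_div, Complex.norm_natCast, hBnorm]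
  have step1 : ‖(ascPochhammer ℂ l).eval (s : ℂ)‖ / (Nat.factorial l : ℝ) * q ^ (z * x) /
      ‖(1 : ℂ) - ((q ^ x : ℝ) : ℂ)‖ ≤ ((m : ℝ) + l) ^ m * r ^ k / (1 - q) := by
    apply div_le_div₀ (by positivity) ?_ hq' hDx
    exact mul_le_mul hAd hBx (Real.rpow_nonneg hq0.le _) (by positivity)
  refine step1.trans (le_of_eq ?_)
  have hrk : r ^ k * r ^ (m + ν) = r ^ l := by
    rw [← pow_add, hk]; congr 1; omega
  rw [← hrk]
  field_simp

lemma sum_bound_summable (q z : ℝ) (hq0 : 0 < q) (hq1 : q < 1) (hz : 0 < z) (m : ℕ) (C : ℝ) :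
    Summable (fun l : ℕ => ((m : ℝ) + l) ^ m * (q ^ z) ^ l * C) := by
  set r : ℝ := q ^ z with hr
  have hr0 : 0 < r := Real.rpow_pos_of_pos hq0 z
  have hr1 : r < 1 := Real.rpow_lt_one hq0.le hq1 hz
  have h0 : Summable (fun n : ℕ => (n : ℝ) ^ m * r ^ n) :=
    summable_pow_mul_geometric_of_norm_lt_one m
      (by rw [Real.norm_eq_abs, _root_.abs_of_pos hr0]; exact hr1)
  have h1 : Summable (fun l : ℕ => ((l + m : ℕ) : ℝ) ^ m * r ^ (l + m)) :=
    (summable_nat_add_iff m).2 h0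
  have h2 := (h1.mul_right ((r ^ m)⁻¹ * C))
  refine h2.congr fun l => ?_
  push_cast
  rw [show ((l : ℝ) + m) ^ m * r ^ (l + m) * ((r ^ m)⁻¹ * C)
      = ((m : ℝ) + l) ^ m * (r ^ (l + m) * (r ^ m)⁻¹) * C by ring]
  rw [pow_add, mul_inv_cancel_right₀ (by positivity)]

lemma aP_eval_neg (m i : ℕ) (hm : 1 ≤ m) (hi : i < m) :
    (ascPochhammer ℂ i).eval (1 - (m : ℂ)) = (-1) ^ i * ((Nat.factorial i : ℂ)) *
      ((m - 1).choose i : ℂ) := by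
  rw [aP_prod]
  have h1 : ∀ j ∈ Finset.range i, (1 - (m : ℂ) + j) = -(((m - 1 - j : ℕ)) : ℂ) := by
    intro j hj
    rw [Finset.mem_range] at hj
    push_cast [Nat.cast_sub (by omega : j ≤ m - 1), Nat.cast_sub hm]
    ring
  rw [Finset.prod_congr rfl h1]
  have hneg : (∏ j ∈ Finset.range i, -((((m - 1 - j : ℕ)) : ℂ))) =
      (-1) ^ i * ∏ j ∈ Finset.range i, ((((m - 1 - j : ℕ)) : ℂ)) := by
    rw [show (fun j => -((((m - 1 - j : ℕ)) : ℂ))) = fun j =>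
      (-1) * ((((m - 1 - j : ℕ)) : ℂ)) from funext fun j => by ring]
    rw [Finset.prod_mul_distrib, Finset.prod_const, Finset.card_range]
  rw [hneg]
  have h2 : (∏ j ∈ Finset.range i, (((m - 1 - j : ℕ)) : ℂ)) =
      (((m - 1).descFactorial i : ℕ) : ℂ) := by
    rw [Nat.descFactorial_eq_prod_range]
    push_cast
    rfl
  rw [h2, Nat.descFactorial_eq_factorial_mul_choose]
  push_cast
  ring

lemma prod_erase_eval (ν m : ℕ) (hν : 0 < ν) (hm : 1 ≤ m) :
    (∏ j ∈ (Finset.range (m + ν - 1)).erase (m - 1), ((1 : ℂ) - (m : ℂ) + (j : ℂ))) =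
      (-1) ^ (m - 1) * ((Nat.factorial (m - 1) : ℂ)) * ((Nat.factorial (ν - 1) : ℂ)) := by
  have hsplit : (Finset.range (m + ν - 1)).erase (m - 1) =
      Finset.range (m - 1) ∪ Finset.Ico m (m + ν - 1) := by
    ext j
    simp only [Finset.mem_erase, Finset.mem_range, Finset.mem_union, Finset.mem_Ico]
    omega
  have hdisj : Disjoint (Finset.range (m - 1)) (Finset.Ico m (m + ν - 1)) := by
    rw [Finset.disjoint_left]
    intro j hj hj2
    rw [Finset.mem_range] at hj
    rw [Finset.mem_Ico] at hj2
    omega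
  rw [hsplit, Finset.prod_union hdisj]
  have h1 : (∏ j ∈ Finset.range (m - 1), ((1 : ℂ) - (m : ℂ) + (j : ℂ))) =
      (-1) ^ (m - 1) * ((Nat.factorial (m - 1) : ℂ)) := by
    rw [← aP_prod, aP_eval_neg m (m - 1) hm (by omega), Nat.choose_self]
    push_cast; ring
  have h2 : (∏ j ∈ Finset.Ico m (m + ν - 1), ((1 : ℂ) - (m : ℂ) + (j : ℂ))) =
      ((Nat.factorial (ν - 1) : ℂ)) := by
    rw [Finset.prod_Ico_eq_prod_range]
    have he : ∀ i ∈ Finset.range (m + ν - 1 - m), ((1 : ℂ) - (m : ℂ) + ((m + i : ℕ) : ℂ)) =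
        ((i : ℂ) + 1) := by
      intro i _; push_cast; ring
    rw [Finset.prod_congr rfl he]
    have : (m + ν - 1 - m) = ν - 1 := by omega
    rw [this]
    rw [show (fun i : ℕ => ((i : ℂ) + 1)) = fun i : ℕ => (((i + 1 : ℕ)) : ℂ) from
      funext fun i => by push_cast; ring]
    rw [← Nat.cast_prod]
    rw [Finset.prod_range_add_one_eq_factorial]
  rw [h1, h2]

lemma value_eq (q z : ℝ) (hq0 : 0 < q) (hq1 : q < 1) (ν m : ℕ) (hν : 0 < ν) (hm : 1 ≤ m) :
    Complex.exp (((((1 : ℝ) - (m : ℝ)) : ℝ) : ℂ) * ((Real.log (1 - q) : ℝ) : ℂ)) *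
      ∑' l : ℕ, Gq q z ν m l = -(Bq q ν ((z : ℝ) : ℂ) m) / (m : ℂ) := by
  have hlogq : (Real.log q : ℂ) ≠ 0 :=
    Complex.ofReal_ne_zero.2 (Real.log_ne_zero_of_pos_of_ne_one hq0 hq1.ne)
  have hm0 : (m : ℂ) ≠ 0 := Nat.cast_ne_zero.2 (by omega)
  set c : ℂ := (-1) ^ m with hc
  have hnotmem : m + ν - 1 ∉ Finset.range m := by
    rw [Finset.mem_range]; omega
  have htsum : ∑' l : ℕ, Gq q z ν m l =
      Gq q z ν m (m + ν - 1) + ∑ l ∈ Finset.range m, Gq q z ν m l := by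
    rw [tsum_eq_sum (s := insert (m + ν - 1) (Finset.range m))
      (fun l hl => by
        simp only [Finset.mem_insert, Finset.mem_range, not_or] at hl
        exact Gq_zero q z ν m l hm (by omega) hl.1)]
    rw [Finset.sum_insert hnotmem]
  have hChpos : 0 < (m + ν - 1).choose (ν - 1) := Nat.choose_pos (by omega)
  have hCh : ((m + ν - 1).choose (ν - 1) : ℂ) ≠ 0 := Nat.cast_ne_zero.2 hChpos.ne'
  have hGsp : Gq q z ν m (m + ν - 1) =
      c * ((1 : ℂ) / ((m + ν - 1).choose (ν - 1) : ℂ)) * (1 / (Real.log q : ℂ)) / (m : ℂ) := by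
    rw [Gq, if_pos rfl, prod_erase_eval ν m hν hm]
    have hfacN : ((m + ν - 1).choose (ν - 1)) * (Nat.factorial (ν - 1)) * (Nat.factorial m) =
        Nat.factorial (m + ν - 1) := by
      have h := Nat.choose_mul_factorial_mul_factorial (show ν - 1 ≤ m + ν - 1 by omega)
      rwa [show m + ν - 1 - (ν - 1) = m by omega] at h
    have hmfac : (Nat.factorial m) = m * Nat.factorial (m - 1) := by
      rw [← Nat.mul_factorial_pred (by omega)]
    have hfacC : ((Nat.factorial (m + ν - 1) : ℕ) : ℂ) =
        ((m + ν - 1).choose (ν - 1) : ℂ) * (Nat.factorial (ν - 1) : ℂ) *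
          ((m : ℂ) * (Nat.factorial (m - 1) : ℂ)) := by
      rw [← hfacN, hmfac]; push_cast; ring
    have hsg : ((-1 : ℂ)) ^ (m - 1) * (-1) = c := by
      rw [hc, ← pow_succ, show m - 1 + 1 = m by omega]
    have hfne : ((Nat.factorial (m + ν - 1) : ℕ) : ℂ) ≠ 0 :=
      Nat.cast_ne_zero.2 (Nat.factorial_ne_zero _)
    field_simp
    rw [hfacC]
    linear_combination (((Nat.factorial (ν - 1) : ℂ)) * ((Nat.factorial (m - 1) : ℂ)) *
      ((m + ν - 1).choose (ν - 1) : ℂ) * (m : ℂ)) * hsg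
  set T : ℕ → ℂ := fun l => (-1) ^ l * (Nat.choose m l : ℂ) * (l : ℂ) *
      qpow q (((z : ℝ) : ℂ) * (1 - (l : ℂ) - (ν : ℂ))) /
        (1 - qpow q (1 - (l : ℂ) - (ν : ℂ))) with hT
  have hIcc : ∑ l ∈ Finset.Icc 1 m, T l = ∑ i ∈ Finset.range m, T (m - i) := by
    rw [← Finset.Ico_add_one_right_eq_Icc, Finset.sum_Ico_eq_sum_range,
      show m + 1 - 1 = m from rfl, ← Finset.sum_range_reflect]
    apply Finset.sum_congr rfl
    intro i hi
    rw [Finset.mem_range] at hi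
    congr 1
    omega
  have hterm : ∀ i ∈ Finset.range m, Gq q z ν m i = c * T (m - i) / (m : ℂ) := by
    intro i hi
    rw [Finset.mem_range] at hi
    rw [Gq, if_neg (by omega), aP_eval_neg m i hm hi]
    simp only [hT]
    have hmi : ((m - i : ℕ) : ℂ) = (m : ℂ) - (i : ℂ) := by
      push_cast [Nat.cast_sub hi.le]; ring
    have harg : (1 : ℂ) - ((m - i : ℕ) : ℂ) - (ν : ℂ) = 1 - (m : ℂ) - (ν : ℂ) + (i : ℂ) := by
      rw [hmi]; ring
    rw [harg, hmi]
    have hnat : (m.choose (m - i)) * (m - i) = m * ((m - 1).choose i) := by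
      have h := Nat.choose_mul_succ_eq (m - 1) i
      rw [show m - 1 + 1 = m by omega] at h
      rw [Nat.choose_symm hi.le, ← h]
      ring
    have hnatC : (m.choose (m - i) : ℂ) * ((m : ℂ) - (i : ℂ)) =
        (m : ℂ) * ((m - 1).choose i : ℂ) := by
      rw [← hmi]
      exact_mod_cast congrArg (fun t : ℕ => (t : ℂ)) hnat
    have hsgn : c * (-1 : ℂ) ^ (m - i) = (-1) ^ i := by
      rw [hc, ← pow_add, show m + (m - i) = 2 * (m - i) + i by omega, pow_add, pow_mul]
      norm_num
    have hfac : ((Nat.factorial i : ℕ) : ℂ) ≠ 0 := Nat.cast_ne_zero.2 (Nat.factorial_ne_zero _)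
    set QP : ℂ := qpow q (((z : ℝ) : ℂ) * (1 - (m : ℂ) - (ν : ℂ) + (i : ℂ))) with hQP
    set DEN : ℂ := 1 - qpow q (1 - (m : ℂ) - (ν : ℂ) + (i : ℂ)) with hDEN
    have e1 : c * ((-1 : ℂ) ^ (m - i) * (m.choose (m - i) : ℂ) * ((m : ℂ) - (i : ℂ)) * QP / DEN)
          / (m : ℂ)
        = (c * (-1 : ℂ) ^ (m - i)) *
            (((m.choose (m - i) : ℂ) * ((m : ℂ) - (i : ℂ))) / (m : ℂ)) * (QP / DEN) := by
      ring
    rw [e1, hsgn, hnatC, mul_div_cancel_left₀ _ hm0]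
    rw [show ((-1 : ℂ) ^ i * (Nat.factorial i : ℂ) * ((m - 1).choose i : ℂ)) /
        (Nat.factorial i : ℂ) = (-1 : ℂ) ^ i * ((m - 1).choose i : ℂ) *
          ((Nat.factorial i : ℂ) / (Nat.factorial i : ℂ)) from by ring,
      div_self hfac, mul_one]
    ring
  have hsum : ∑ l ∈ Finset.range m, Gq q z ν m l =
      c * (∑ l ∈ Finset.Icc 1 m, T l) / (m : ℂ) := by
    rw [Finset.sum_congr rfl hterm, hIcc, Finset.mul_sum, Finset.sum_div]
  have h1q : (0 : ℝ) < 1 - q := by linarith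
  have hu : ((1 - q : ℝ) : ℂ) ≠ 0 := Complex.ofReal_ne_zero.2 h1q.ne'
  have hE : Complex.exp (((((1 : ℝ) - (m : ℝ)) : ℝ) : ℂ) * ((Real.log (1 - q) : ℝ) : ℂ)) =
      ((1 - q : ℝ) : ℂ) ^ ((1 : ℤ) - (m : ℤ)) := by
    rw [show ((((1 : ℝ) - (m : ℝ)) : ℝ) : ℂ) = (((1 - (m : ℤ)) : ℤ) : ℂ) by push_cast; ring]
    rw [Complex.exp_int_mul, ← Complex.ofReal_exp, Real.exp_log h1q]
  have hneg1 : ((q : ℂ) - 1) ^ ((1 : ℤ) - (m : ℤ)) =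
      (-c) * ((1 - q : ℝ) : ℂ) ^ ((1 : ℤ) - (m : ℤ)) := by
    rw [show (q : ℂ) - 1 = (-1) * ((1 - q : ℝ) : ℂ) by push_cast; ring, mul_zpow]
    congr 1
    rw [zpow_sub₀ (by norm_num : (-1 : ℂ) ≠ 0), zpow_one, zpow_natCast]
    rcases neg_one_pow_eq_or ℂ m with h | h <;> rw [hc, h] <;> norm_num
  rw [htsum, hGsp, hsum, hE, Bq, hneg1, ← hT]
  ring

theorem stmt16 (q : ℝ) (hq0 : 0 < q) (hq1 : q < 1) (ν : ℕ) (hν : 0 < ν)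
    (z : ℝ) (hz : 0 < z) (m : ℕ) (hm : 1 ≤ m) :
    Tendsto (fun s : ℝ =>
        Complex.exp ((s : ℂ) * Real.log (1 - q)) *
          ∑' l : ℕ, ((ascPochhammer ℂ l).eval (s : ℂ) / (Nat.factorial l : ℂ)) *
            qpow q ((z : ℂ) * ((s : ℂ) - (ν : ℂ) + (l : ℂ))) /
              (1 - qpow q ((s : ℂ) - (ν : ℂ) + (l : ℂ))))
      (nhdsWithin ((1 : ℝ) - m) {s : ℝ | ∀ k : ℤ, s ≠ (k : ℝ)})
      (nhds (-(Bq q ν (z : ℂ) m) / (m : ℂ))) := by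
  set 𝓕 := nhdsWithin ((1 : ℝ) - m) {s : ℝ | ∀ k : ℤ, s ≠ (k : ℝ)} with h𝓕
  set L : ℕ := m + ν + 2 with hL
  have hlim : ∀ l : ℕ, Tendsto (fun s : ℝ => Fq q z ν s l) 𝓕 (nhds (Gq q z ν m l)) := by
    intro l
    by_cases h : l = m + ν - 1
    · rw [h]; exact tends_sp q z hq0 hq1 ν m hν hm
    · exact tends_ns q z hq0 hq1 ν m l hν hm h
  -- the summable bound
  set rB : ℕ → ℝ := fun l =>
    ((m : ℝ) + l) ^ m * (q ^ z) ^ l * (((1 - q) * (q ^ z) ^ (m + ν))⁻¹) with hrB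
  have hrBnonneg : ∀ l, 0 ≤ rB l := by
    intro l
    have h1q : (0 : ℝ) < 1 - q := by linarith
    have := Real.rpow_pos_of_pos hq0 z
    positivity
  set bound : ℕ → ℝ := fun l => if l < L then ‖Gq q z ν m l‖ + 1 else rB l with hbound
  have hsummable : Summable bound := by
    have hs1 : Summable (fun l => if l < L then ‖Gq q z ν m l‖ + 1 else (0 : ℝ)) := by
      apply summable_of_ne_finset_zero (s := Finset.range L)
      intro b hb
      rw [Finset.mem_range] at hb
      rw [if_neg (by omega)]
    have hs2 : Summable rB := sum_bound_summable q z hq0 hq1 hz m _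
    have hs2' : Summable (fun l => if l < L then (0 : ℝ) else rB l) := by
      apply Summable.of_nonneg_of_le (fun l => ?_) (fun l => ?_) hs2
      · by_cases hl : l < L
        · rw [if_pos hl]
        · rw [if_neg hl]; exact hrBnonneg l
      by_cases hl : l < L
      · rw [if_pos hl]; exact hrBnonneg l
      · rw [if_neg hl]
    have := hs1.add hs2'
    refine this.congr fun l => ?_
    by_cases hl : l < L <;> simp [hbound, hl]
  have hbd : ∀ᶠ s in 𝓕, ∀ l : ℕ, ‖Fq q z ν s l‖ ≤ bound l := by
    have h1 : ∀ᶠ s in nhds ((1 : ℝ) - m), |s - ((1 : ℝ) - m)| ≤ 1 := by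
      filter_upwards [Metric.closedBall_mem_nhds ((1 : ℝ) - m) one_pos] with s hs
      rw [Metric.mem_closedBall, Real.dist_eq] at hs
      exact hs
    have hball : ∀ᶠ s in 𝓕, |s - ((1 : ℝ) - m)| ≤ 1 := h1.filter_mono nhdsWithin_le_nhds
    have hsmall : ∀ᶠ s in 𝓕, ∀ l ∈ Finset.range L, ‖Fq q z ν s l‖ ≤ ‖Gq q z ν m l‖ + 1 := by
      rw [Filter.eventually_all_finset]
      intro l _
      exact Filter.Tendsto.eventually_le_const (lt_add_one _) (hlim l).norm
    filter_upwards [hball, hsmall] with s hs1 hs2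
    intro l
    by_cases hl : l < L
    · rw [hbound]; simp only [if_pos hl]
      exact hs2 l (Finset.mem_range.2 hl)
    · rw [hbound]; simp only [if_neg hl]
      exact norm_Fq_le q z hq0 hq1 hz ν m hm s hs1 l (by omega)
  have htsum : Tendsto (fun s : ℝ => ∑' l : ℕ, Fq q z ν s l) 𝓕
      (nhds (∑' l : ℕ, Gq q z ν m l)) :=
    tendsto_tsum_of_dominated_convergence hsummable hlim hbd
  have hpre : Tendsto (fun s : ℝ => Complex.exp ((s : ℂ) * (Real.log (1 - q) : ℂ))) 𝓕
      (nhds (Complex.exp (((((1 : ℝ) - (m : ℝ)) : ℝ) : ℂ) * ((Real.log (1 - q) : ℝ) : ℂ)))) := by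
    have hc : Continuous fun s : ℝ => Complex.exp ((s : ℂ) * (Real.log (1 - q) : ℂ)) :=
      Complex.continuous_exp.comp (Complex.continuous_ofReal.mul continuous_const)
    exact (hc.tendsto _).mono_left nhdsWithin_le_nhds
  have hfinal := hpre.mul htsum
  rw [value_eq q z hq0 hq1 ν m hν hm] at hfinal
  exact hfinal
end

section
/- Let ν be a positive integer, let z > 0 be real and let s ∈ ℂ with Re(s) > ν + 1. Then, as q tends to 1 from below, ζ_q^{(ν)}(s,z) := Σ_{n=0}^∞ q^{(n+z)(s−ν)}·[n+z]_q^{−s} converges to the Hurwitz zeta value ζ(s,z) = Σ_{n=0}^∞ (n+z)^{−s}. -/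
open Complex Filter

/-- `ζ_q^{(ν)}(s,z) := Σ_{n≥0} q^{(n+z)(s−ν)} · [n+z]_q^{−s}` for real `z > 0`,
where `[n+z]_q = (1 − q^{n+z})/(1 − q)` is a positive real and
`[n+z]_q^{−s} := exp(−s · ln [n+z]_q)`. -/
noncomputable def zetaQReal (q : ℝ) (ν : ℕ) (s : ℂ) (z : ℝ) : ℂ :=
  ∑' n : ℕ, qpow q (((n : ℂ) + (z : ℂ)) * (s - (ν : ℂ))) *
    Complex.exp (-s * Real.log ((1 - q ^ ((n : ℝ) + z)) / (1 - q)))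

theorem key_bound (a q σ c : ℝ) (ha : 0 < a) (hq0 : 0 < q) (hq1 : q < 1) (hc : 1 ≤ c) (hcσ : c ≤ σ) :
    q ^ (a * c) * ((1 - q ^ a) / (1 - q)) ^ (-σ) ≤ σ ^ σ * a ^ (-σ) := by
  have hσ1 : (1:ℝ) ≤ σ := hc.trans hcσ
  have hσ0 : (0:ℝ) < σ := lt_of_lt_of_le one_pos hσ1
  set u : ℝ := a * (1 - q) with hu_def
  have hu : 0 < u := mul_pos ha (by linarith)
  have hx : q ^ a ≤ Real.exp (-u) := by
    rw [Real.rpow_def_of_pos hq0]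
    apply Real.exp_le_exp.2
    have := Real.log_le_sub_one_of_pos hq0
    nlinarith
  have hxa : (0:ℝ) < q ^ a := Real.rpow_pos_of_pos hq0 a
  have h1x : u / (1 + u) ≤ 1 - q ^ a := by
    have h2 : 1 + u ≤ Real.exp u := by linarith [Real.add_one_le_exp u]
    have h3 : Real.exp (-u) ≤ 1 / (1 + u) := by
      rw [Real.exp_neg, inv_eq_one_div]
      gcongr
    have h4 : u / (1 + u) = 1 - 1 / (1 + u) := by field_simp; ring
    linarith
  have hL : a / (1 + u) ≤ (1 - q ^ a) / (1 - q) := by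
    have h5 : a / (1 + u) = (u / (1 + u)) / (1 - q) := by
      rw [div_div, hu_def, mul_div_mul_right _ _ (by linarith : (1:ℝ) - q ≠ 0)]
    rw [h5]
    gcongr
  have hLpos : (0:ℝ) < a / (1 + u) := div_pos ha (by linarith)
  have step1 : ((1 - q ^ a) / (1 - q)) ^ (-σ) ≤ (a / (1 + u)) ^ (-σ) :=
    Real.rpow_le_rpow_of_nonpos hLpos hL (by linarith)
  have step2 : q ^ (a * c) ≤ Real.exp (-(c * u)) := by
    calc q ^ (a * c) = (q ^ a) ^ c := Real.rpow_mul hq0.le a c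
      _ ≤ (Real.exp (-u)) ^ c := by gcongr
      _ = Real.exp (-u * c) := (Real.exp_mul (-u) c).symm
      _ = Real.exp (-(c * u)) := by ring_nf
  have expand : (a / (1 + u)) ^ (-σ) = (1 + u) ^ σ * a ^ (-σ) := by
    rw [Real.div_rpow ha.le (by linarith), Real.rpow_neg (by linarith : (0:ℝ) ≤ 1 + u)]
    rw [div_eq_mul_inv, inv_inv, mul_comm]
  have final : Real.exp (-(c * u)) * (1 + u) ^ σ ≤ σ ^ σ := by
    have hlog : Real.log (1 + u) ≤ Real.log σ + (1 + u - σ) / σ := by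
      have h6 : Real.log ((1 + u) / σ) ≤ (1 + u) / σ - 1 :=
        Real.log_le_sub_one_of_pos (div_pos (by linarith) hσ0)
      have h7 : Real.log ((1 + u) / σ) = Real.log (1 + u) - Real.log σ :=
        Real.log_div (by linarith) (by linarith)
      have h8 : (1 + u) / σ - 1 = (1 + u - σ) / σ := by field_simp
      linarith
    have h9 : Real.log (1 + u) * σ - c * u ≤ Real.log σ * σ := by
      have h10 : (1 + u - σ) / σ * σ = 1 + u - σ := by field_simp
      nlinarith [hlog, hu, hσ1, hc]
    calc Real.exp (-(c * u)) * (1 + u) ^ σ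
        = Real.exp (Real.log (1 + u) * σ - c * u) := by
          rw [Real.rpow_def_of_pos (by linarith), ← Real.exp_add]; ring_nf
      _ ≤ Real.exp (Real.log σ * σ) := Real.exp_le_exp.2 h9
      _ = σ ^ σ := (Real.rpow_def_of_pos hσ0 σ).symm
  calc q ^ (a * c) * ((1 - q ^ a) / (1 - q)) ^ (-σ)
      ≤ Real.exp (-(c * u)) * ((1 + u) ^ σ * a ^ (-σ)) := by
        rw [← expand]
        have hqa1 : q ^ a < 1 := Real.rpow_lt_one hq0.le hq1 ha
        exact mul_le_mul step2 step1
          (Real.rpow_nonneg (le_of_lt (div_pos (by linarith) (by linarith))) _)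
          (Real.exp_pos _).le
      _ = (Real.exp (-(c * u)) * (1 + u) ^ σ) * a ^ (-σ) := by ring
      _ ≤ σ ^ σ * a ^ (-σ) :=
        mul_le_mul_of_nonneg_right final (Real.rpow_nonneg ha.le _)


theorem stmt18 (ν : ℕ) (hν : 0 < ν) (z : ℝ) (hz : 0 < z)
    (s : ℂ) (hs : (ν : ℝ) + 1 < s.re) :
    Tendsto (fun q : ℝ => zetaQReal q ν s z) (nhdsWithin 1 (Set.Ioo (0 : ℝ) 1))
      (nhds (∑' n : ℕ, Complex.exp (-s * Real.log ((n : ℝ) + z)))) := by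
  set σ := s.re with hσ_def
  set c := σ - ν with hc_def
  have hc1 : 1 ≤ c := by rw [hc_def]; linarith
  have hcσ : c ≤ σ := by have : (0:ℝ) ≤ ν := Nat.cast_nonneg ν; rw [hc_def]; linarith
  have hσ1 : 1 < σ := by have : (0:ℝ) ≤ ν := Nat.cast_nonneg ν; linarith
  have ha : ∀ n : ℕ, (0:ℝ) < (n:ℝ) + z := fun n => by positivity
  -- summable bound
  have hsum : Summable (fun n : ℕ => σ ^ σ * ((n:ℝ) + z) ^ (-σ)) := by
    apply Summable.mul_left
    have h := (Real.summable_one_div_nat_add_rpow z σ).2 (by linarith)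
    refine h.congr fun n => ?_
    rw [abs_of_pos (ha n), Real.rpow_neg (ha n).le, one_div]
  simp only [zetaQReal]
  apply tendsto_tsum_of_dominated_convergence hsum
  · -- pointwise limits
    intro n
    set a : ℝ := (n:ℝ) + z with ha_def
    have han : (0:ℝ) < a := ha n
    -- first factor → 1
    have hlog : Tendsto Real.log (nhdsWithin 1 (Set.Ioo (0:ℝ) 1)) (nhds 0) := by
      have h1 := (Real.continuousAt_log (by norm_num : (1:ℝ) ≠ 0)).tendsto
      rw [Real.log_one] at h1
      exact h1.mono_left nhdsWithin_le_nhds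
    have hfac1 : Tendsto (fun q : ℝ => qpow q (((n : ℂ) + (z : ℂ)) * (s - (ν : ℂ))))
        (nhdsWithin 1 (Set.Ioo (0:ℝ) 1)) (nhds 1) := by
      have hcont : Continuous fun r : ℝ =>
          Complex.exp (((n : ℂ) + (z : ℂ)) * (s - (ν : ℂ)) * (r : ℂ)) := by continuity
      have h2 := (hcont.tendsto 0).comp hlog
      simpa [qpow, Function.comp_def] using h2
    -- second factor
    have hD : HasDerivAt (fun x : ℝ => x ^ a) (a * (1:ℝ) ^ (a - 1)) 1 :=
      Real.hasDerivAt_rpow_const (Or.inl one_ne_zero)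
    rw [Real.one_rpow, mul_one] at hD
    have hslope := hasDerivAt_iff_tendsto_slope.mp hD
    have hmono : nhdsWithin (1:ℝ) (Set.Ioo (0:ℝ) 1) ≤ nhdsWithin 1 {(1:ℝ)}ᶜ :=
      nhdsWithin_mono _ (fun x hx => ne_of_lt hx.2)
    have hLlim : Tendsto (fun q : ℝ => (1 - q ^ a) / (1 - q))
        (nhdsWithin 1 (Set.Ioo (0:ℝ) 1)) (nhds a) := by
      refine ((hslope.mono_left hmono).congr' ?_)
      filter_upwards [self_mem_nhdsWithin] with q hq
      have hne : q - 1 ≠ 0 := by have := hq.2; intro h; apply absurd hq.2; linarith [sub_eq_zero.mp h]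
      have hne' : (1:ℝ) - q ≠ 0 := by intro h; apply hne; linarith
      rw [slope_def_field, Real.one_rpow]
      field_simp
      ring
    have hloga : Tendsto (fun q : ℝ => Real.log ((1 - q ^ a) / (1 - q)))
        (nhdsWithin 1 (Set.Ioo (0:ℝ) 1)) (nhds (Real.log a)) :=
      ((Real.continuousAt_log han.ne').tendsto).comp hLlim
    have hcont2 : Continuous fun r : ℝ => Complex.exp (-s * (r : ℂ)) := by continuity
    have hfac2 : Tendsto (fun q : ℝ => Complex.exp (-s * (Real.log ((1 - q ^ ((n:ℝ) + z)) / (1 - q)) : ℂ)))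
        (nhdsWithin 1 (Set.Ioo (0:ℝ) 1)) (nhds (Complex.exp (-s * (Real.log ((n:ℝ) + z) : ℂ)))) := by
      have := (hcont2.tendsto (Real.log a)).comp hloga
      simpa [ha_def, Function.comp_def] using this
    have := hfac1.mul hfac2
    rw [one_mul] at this
    exact this
  · -- norm bound
    filter_upwards [self_mem_nhdsWithin] with q hq
    intro n
    obtain ⟨hq0, hq1⟩ := hq
    have han : (0:ℝ) < (n:ℝ) + z := ha n
    have hqa : (0:ℝ) < q ^ ((n:ℝ) + z) := Real.rpow_pos_of_pos hq0 _
    have hqa1 : q ^ ((n:ℝ) + z) < 1 := Real.rpow_lt_one hq0.le hq1 han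
    have hLpos : (0:ℝ) < (1 - q ^ ((n:ℝ) + z)) / (1 - q) := by
      apply div_pos <;> linarith
    have hre1 : ((((n : ℂ) + (z : ℂ)) * (s - (ν : ℂ))) * ((Real.log q : ℝ) : ℂ)).re
        = (((n:ℝ) + z) * c) * Real.log q := by
      simp [Complex.mul_re, Complex.mul_im, hc_def, hσ_def]
    have hre2 : ((-s) * ((Real.log ((1 - q ^ ((n:ℝ) + z)) / (1 - q)) : ℝ) : ℂ)).re
        = -σ * Real.log ((1 - q ^ ((n:ℝ) + z)) / (1 - q)) := by
      simp [Complex.mul_re, hσ_def]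
    calc ‖qpow q (((n : ℂ) + (z : ℂ)) * (s - (ν : ℂ))) *
          Complex.exp (-s * (Real.log ((1 - q ^ ((n:ℝ) + z)) / (1 - q)) : ℂ))‖
        = Real.exp ((((n:ℝ) + z) * c) * Real.log q) *
          Real.exp (-σ * Real.log ((1 - q ^ ((n:ℝ) + z)) / (1 - q))) := by
          rw [qpow, norm_mul,
            Complex.norm_exp, Complex.norm_exp, hre1, hre2]
      _ = q ^ (((n:ℝ) + z) * c) * ((1 - q ^ ((n:ℝ) + z)) / (1 - q)) ^ (-σ) := by
          rw [Real.rpow_def_of_pos hq0 (((n:ℝ) + z) * c), Real.rpow_def_of_pos hLpos (-σ)]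
          ring_nf
      _ ≤ σ ^ σ * ((n:ℝ) + z) ^ (-σ) := key_bound _ _ _ _ han hq0 hq1 hc1 hcσ
end

section
/- Let 0 < q < 1, let ν ≥ 2 be an integer, let m be an integer with 1 ≤ m ≤ ν − 1, and let s ∈ ℂ with Re(s) > ν. Then ζ_q^{(ν−m)}(s) = Σ_{l=0}^m (−1)^l·C(m,l)·(1−q)^l·ζ_q^{(ν−l)}(s−l), where all the series involved converge absolutely. In particular (m = 1), ζ_q^{(ν)}(s) = ζ_q^{(ν−1)}(s) + (1−q)·ζ_q^{(ν−1)}(s−1). -/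
open Complex

/-- the term of index `n+1` of the series defining `ζ_q^{(μ)}(s) = Σ_{n≥1} q^{n(s−μ)}·[n]_q^{−s}`,
where `[n]_q = (1 − q^n)/(1 − q)` is a positive real and `[n]_q^{−s} := exp(−s · ln [n]_q)`. -/
noncomputable def zqTerm (q : ℝ) (μ : ℕ) (s : ℂ) (n : ℕ) : ℂ :=
  Complex.exp ((((n : ℂ) + 1) * (s - (μ : ℂ))) * Real.log q) *
    Complex.exp (-s * Real.log ((1 - q ^ (n + 1)) / (1 - q)))

/-- `ζ_q^{(μ)}(s)`. -/
noncomputable def zq (q : ℝ) (μ : ℕ) (s : ℂ) : ℂ := ∑' n : ℕ, zqTerm q μ s n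

lemma hA_ge_one (q : ℝ) (hq0 : 0 < q) (hq1 : q < 1) (n : ℕ) :
    (1:ℝ) ≤ (1 - q ^ (n + 1)) / (1 - q) := by
  rw [le_div_iff₀ (by linarith)]
  have : q ^ (n+1) ≤ q := by
    calc q ^ (n+1) ≤ q ^ 1 := pow_le_pow_of_le_one hq0.le hq1.le (by omega)
    _ = q := pow_one q
  linarith

lemma norm_zqTerm (q : ℝ) (hq0 : 0 < q) (hq1 : q < 1) (μ : ℕ) (s : ℂ) (n : ℕ) :
    ‖zqTerm q μ s n‖ = Real.exp (((n:ℝ)+1) * (s.re - μ) * Real.log q) *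
      Real.exp (-s.re * Real.log ((1 - q ^ (n + 1)) / (1 - q))) := by
  rw [zqTerm, norm_mul, Complex.norm_exp,
    Complex.norm_exp]
  rw [← Real.exp_add, ← Real.exp_add]
  congr 1
  simp [Complex.mul_re, Complex.add_re, Complex.sub_re]
  done

lemma summable_norm (q : ℝ) (hq0 : 0 < q) (hq1 : q < 1) (μ : ℕ) (s : ℂ)
    (hs : (μ:ℝ) < s.re) : Summable (fun n : ℕ => ‖zqTerm q μ s n‖) := by
  set r : ℝ := Real.exp ((s.re - μ) * Real.log q) with hr
  have hr0 : 0 < r := Real.exp_pos _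
  have hr1 : r < 1 := by
    rw [hr, Real.exp_lt_one_iff]
    have hlq : Real.log q < 0 := Real.log_neg hq0 hq1
    nlinarith
  have hgeom : Summable (fun n : ℕ => r * r ^ n) :=
    (summable_geometric_of_lt_one hr0.le hr1).mul_left r
  apply Summable.of_nonneg_of_le (fun n => norm_nonneg _) _ hgeom
  intro n
  rw [norm_zqTerm q hq0 hq1]
  have h1 : Real.exp (((n:ℝ)+1) * (s.re - μ) * Real.log q) = r * r ^ n := by
    rw [hr, ← Real.exp_nat_mul, ← Real.exp_add]
    ring_nf
  rw [h1]
  have h2 : Real.exp (-s.re * Real.log ((1 - q ^ (n + 1)) / (1 - q))) ≤ 1 := by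
    rw [Real.exp_le_one_iff]
    have hlog : 0 ≤ Real.log ((1 - q ^ (n + 1)) / (1 - q)) :=
      Real.log_nonneg (hA_ge_one q hq0 hq1 n)
    have hs0 : 0 ≤ s.re := by
      have : (0:ℝ) ≤ (μ:ℝ) := Nat.cast_nonneg μ
      linarith
    nlinarith
  nlinarith [mul_pos hr0 (pow_pos hr0 n)]
lemma exp_log_pow (x : ℝ) (hx : 0 < x) (k : ℕ) :
    Complex.exp ((k : ℂ) * (Real.log x : ℂ)) = ((x : ℂ)) ^ k := by
  rw [Complex.exp_nat_mul, ← Complex.ofReal_exp, Real.exp_log hx]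

lemma zqTerm_shift (q : ℝ) (hq0 : 0 < q) (hq1 : q < 1) (ν l : ℕ) (hl : l ≤ ν)
    (s : ℂ) (n : ℕ) :
    zqTerm q (ν - l) (s - (l : ℂ)) n =
      (Complex.exp ((((n : ℂ) + 1) * (s - (ν : ℂ))) * Real.log q) *
        Complex.exp (-s * Real.log ((1 - q ^ (n + 1)) / (1 - q)))) *
      ((((1 - q ^ (n + 1)) / (1 - q) : ℝ) : ℂ)) ^ l := by
  have hApos : (0:ℝ) < (1 - q ^ (n + 1)) / (1 - q) := by
    apply div_pos
    · have : q ^ (n+1) < 1 := pow_lt_one₀ hq0.le hq1 (by omega)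
      linarith
    · linarith
  have hcast : ((ν - l : ℕ) : ℂ) = (ν : ℂ) - (l : ℂ) := by
    push_cast [hl]; ring
  rw [zqTerm, hcast]
  have h1 : ((n : ℂ) + 1) * (s - (l:ℂ) - ((ν:ℂ) - (l:ℂ))) * Real.log q
      = ((n : ℂ) + 1) * (s - (ν:ℂ)) * Real.log q := by ring
  have h2 : -(s - (l:ℂ)) * (Real.log ((1 - q ^ (n + 1)) / (1 - q)) : ℂ)
      = -s * (Real.log ((1 - q ^ (n + 1)) / (1 - q)) : ℂ)
        + (l:ℂ) * (Real.log ((1 - q ^ (n + 1)) / (1 - q)) : ℂ) := by ring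
  rw [h1, h2, Complex.exp_add, exp_log_pow _ hApos]
  ring

lemma zqTerm_key (q : ℝ) (hq0 : 0 < q) (hq1 : q < 1) (ν m : ℕ) (hm : m ≤ ν)
    (s : ℂ) (n : ℕ) :
    zqTerm q (ν - m) s n = ∑ l ∈ Finset.range (m + 1),
      (-1) ^ l * (Nat.choose m l : ℂ) * (1 - (q : ℂ)) ^ l * zqTerm q (ν - l) (s - (l : ℂ)) n := by
  set A : ℝ := (1 - q ^ (n + 1)) / (1 - q) with hA
  set G : ℂ := Complex.exp ((((n : ℂ) + 1) * (s - (ν : ℂ))) * Real.log q) *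
      Complex.exp (-s * Real.log A) with hG
  have hrw : ∀ l ∈ Finset.range (m + 1),
      (-1) ^ l * (Nat.choose m l : ℂ) * (1 - (q : ℂ)) ^ l * zqTerm q (ν - l) (s - (l : ℂ)) n
      = (-(1 - (q:ℂ)) * (A : ℂ)) ^ l * 1 ^ (m - l) * (Nat.choose m l : ℂ) * G := by
    intro l hl
    have hlm : l ≤ m := Nat.lt_succ_iff.mp (Finset.mem_range.mp hl)
    rw [zqTerm_shift q hq0 hq1 ν l (le_trans hlm hm) s n]
    rw [show (-(1 - (q:ℂ)) * ((A:ℝ):ℂ)) ^ l = (-1) ^ l * (1 - (q:ℂ)) ^ l * ((A:ℝ):ℂ) ^ l from by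
      rw [neg_mul, neg_pow, mul_pow]; ring]
    ring
  rw [Finset.sum_congr rfl hrw, ← Finset.sum_mul, ← add_pow]
  have hq1c : (1:ℂ) - (q:ℂ) ≠ 0 := by
    simp only [ne_eq, sub_eq_zero]
    exact fun h => by
      have : (q:ℂ) = 1 := h.symm
      exact absurd (Complex.ofReal_inj.mp (by simpa using this)) (by linarith)
  have hAq : -(1 - (q:ℂ)) * (A : ℂ) + 1 = ((q : ℂ)) ^ (n + 1) := by
    rw [hA]
    push_cast
    field_simp
    ring
  rw [hAq]
  -- LHS
  have hcast : ((ν - m : ℕ) : ℂ) = (ν : ℂ) - (m : ℂ) := by push_cast [hm]; ring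
  rw [zqTerm, hcast]
  have h1 : ((n : ℂ) + 1) * (s - ((ν:ℂ) - (m:ℂ))) * Real.log q
      = ((n : ℂ) + 1) * (s - (ν:ℂ)) * Real.log q
        + (((n+1) * m : ℕ) : ℂ) * (Real.log q : ℂ) := by push_cast; ring
  rw [h1, Complex.exp_add, exp_log_pow q hq0, pow_mul]
  rw [hG]
  ring

lemma zq_identity (q : ℝ) (hq0 : 0 < q) (hq1 : q < 1) (ν m : ℕ) (hm : m ≤ ν)
    (s : ℂ) (hs : (ν : ℝ) < s.re) :
    zq q (ν - m) s = ∑ l ∈ Finset.range (m + 1),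
      (-1) ^ l * (Nat.choose m l : ℂ) * (1 - (q : ℂ)) ^ l * zq q (ν - l) (s - (l : ℂ)) := by
  have hsum : ∀ l ∈ Finset.range (m + 1),
      Summable (fun n : ℕ => (-1) ^ l * (Nat.choose m l : ℂ) * (1 - (q : ℂ)) ^ l *
        zqTerm q (ν - l) (s - (l : ℂ)) n) := by
    intro l hl
    have hlm : l ≤ m := Nat.lt_succ_iff.mp (Finset.mem_range.mp hl)
    have hcast : ((ν - l : ℕ) : ℝ) = (ν : ℝ) - (l : ℝ) := by
      push_cast [le_trans hlm hm]; ring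
    have hre : ((ν - l : ℕ) : ℝ) < (s - (l : ℂ)).re := by
      rw [hcast]
      simp [Complex.sub_re]
      linarith
    exact ((summable_norm q hq0 hq1 _ _ hre).of_norm).mul_left _
  rw [zq]
  have h1 : ∑' n : ℕ, zqTerm q (ν - m) s n = ∑' n : ℕ, ∑ l ∈ Finset.range (m + 1),
      (-1) ^ l * (Nat.choose m l : ℂ) * (1 - (q : ℂ)) ^ l *
        zqTerm q (ν - l) (s - (l : ℂ)) n :=
    tsum_congr (fun n => zqTerm_key q hq0 hq1 ν m hm s n)
  rw [h1, Summable.tsum_finsetSum hsum]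
  exact Finset.sum_congr rfl (fun l _ => by rw [zq, tsum_mul_left])

theorem stmt19 (q : ℝ) (hq0 : 0 < q) (hq1 : q < 1) (ν : ℕ) (hν : 2 ≤ ν)
    (m : ℕ) (hm1 : 1 ≤ m) (hm2 : m ≤ ν - 1) (s : ℂ) (hs : (ν : ℝ) < s.re) :
    Summable (fun n : ℕ => ‖zqTerm q (ν - m) s n‖) ∧
    (∀ l ∈ Finset.range (m + 1), Summable (fun n : ℕ => ‖zqTerm q (ν - l) (s - (l : ℂ)) n‖)) ∧
    zq q (ν - m) s =
      ∑ l ∈ Finset.range (m + 1),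
        (-1) ^ l * (Nat.choose m l : ℂ) * (1 - (q : ℂ)) ^ l * zq q (ν - l) (s - (l : ℂ)) ∧
    zq q ν s = zq q (ν - 1) s + (1 - (q : ℂ)) * zq q (ν - 1) (s - 1) := by
  have hmν : m ≤ ν := le_trans hm2 (Nat.sub_le ν 1)
  refine ⟨?_, ?_, ?_, ?_⟩
  · apply summable_norm q hq0 hq1
    have : ((ν - m : ℕ) : ℝ) ≤ (ν : ℝ) := by
      exact_mod_cast Nat.cast_le.mpr (Nat.sub_le ν m)
    linarith
  · intro l hl
    have hlm : l ≤ m := Nat.lt_succ_iff.mp (Finset.mem_range.mp hl)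
    apply summable_norm q hq0 hq1
    have hcast : ((ν - l : ℕ) : ℝ) = (ν : ℝ) - (l : ℝ) := by
      push_cast [le_trans hlm hmν]; ring
    rw [hcast]
    simp [Complex.sub_re]
    linarith
  · exact zq_identity q hq0 hq1 ν m hmν s hs
  · have h := zq_identity q hq0 hq1 ν 1 (by omega) s hs
    rw [Finset.sum_range_succ, Finset.sum_range_one] at h
    simp at h
    have e0 : s - (0 : ℂ) = s := by simp
    linear_combination -h
end
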